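/- arXiv:2102.13091 — 3 statements merged into one kernel-verified Lean document; each statement's English description precedes it below -/
import Mathlib

section
/- Truth lemma for the term model: for any finite nonempty consistent pair p of closed formulas in a signature Σ with p⁺ a singleton, any world w of the canonical constant-domain model M[p], any w-assignment g, and any formula φ in the language of Σ such that φ^g ∈ Cl_{M_w}(p), one has M[p], w ⊩^g φ if and only if φ^g ∈ w⁺. -/
namespace QRC1

/-- Strictly positive formulas of QRC₁ over a signature with constants `Cst`,
relation symbols `Rl`, and arity function `ar`.  Terms are either variables
(natural numbers, left) or constants (right). -/
inductive Fml (Cst Rl : Type) (ar : Rl → ℕ) : Type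
  | top : Fml Cst Rl ar
  | rel (S : Rl) (ts : Fin (ar S) → ℕ ⊕ Cst) : Fml Cst Rl ar
  | and (φ ψ : Fml Cst Rl ar) : Fml Cst Rl ar
  | dia (φ : Fml Cst Rl ar) : Fml Cst Rl ar
  | all (x : ℕ) (φ : Fml Cst Rl ar) : Fml Cst Rl ar

namespace Fml

variable {Cst Rl : Type} {ar : Rl → ℕ}

/-- Free variables of a formula. -/
def fv : Fml Cst Rl ar → Set ℕ
  | .top => ∅
  | .rel _ ts => {x | ∃ i, ts i = Sum.inl x}
  | .and φ ψ => fv φ ∪ fv ψ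
  | .dia φ => fv φ
  | .all y φ => fv φ \ {y}

/-- A formula is closed when it has no free variables. -/
def Closed (φ : Fml Cst Rl ar) : Prop := φ.fv = ∅

/-- Constants occurring in a formula. -/
def consts : Fml Cst Rl ar → Set Cst
  | .top => ∅
  | .rel _ ts => {c | ∃ i, ts i = Sum.inr c}
  | .and φ ψ => consts φ ∪ consts ψ
  | .dia φ => consts φ
  | .all _ φ => consts φ

/-- Substitution of a term for a variable, on terms. -/
def substT (x : ℕ) (t : ℕ ⊕ Cst) : ℕ ⊕ Cst → ℕ ⊕ Cst
  | .inl y => if y = x then t else .inl y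
  | .inr c => .inr c

/-- `φ.subst x t` replaces all free occurrences of variable `x` in `φ` by the term `t`. -/
def subst : Fml Cst Rl ar → ℕ → (ℕ ⊕ Cst) → Fml Cst Rl ar
  | .top, _, _ => .top
  | .rel S ts, x, t => .rel S (fun i => substT x t (ts i))
  | .and φ ψ, x, t => .and (φ.subst x t) (ψ.subst x t)
  | .dia φ, x, t => .dia (φ.subst x t)
  | .all y φ, x, t => if y = x then .all y φ else .all y (φ.subst x t)

/-- `FreeFor t x φ`: the term `t` is free for the variable `x` in `φ`, i.e. no
free occurrence of a variable of `t` becomes bound in `φ[x/t]`. -/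
def FreeFor (t : ℕ ⊕ Cst) (x : ℕ) : Fml Cst Rl ar → Prop
  | .top => True
  | .rel _ _ => True
  | .and φ ψ => FreeFor t x φ ∧ FreeFor t x ψ
  | .dia φ => FreeFor t x φ
  | .all y φ => x ∉ fv (Fml.all y φ) ∨ (t ≠ .inl y ∧ FreeFor t x φ)

/-- Modal depth. -/
def mdepth : Fml Cst Rl ar → ℕ
  | .top => 0
  | .rel _ _ => 0
  | .and φ ψ => max φ.mdepth ψ.mdepth
  | .dia φ => φ.mdepth + 1
  | .all _ φ => φ.mdepth

/-- Quantifier depth. -/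
def udepth : Fml Cst Rl ar → ℕ
  | .top => 0
  | .rel _ _ => 0
  | .and φ ψ => max φ.udepth ψ.udepth
  | .dia φ => φ.udepth
  | .all _ φ => φ.udepth + 1

/-- Number of distinct constants occurring in a formula. -/
noncomputable def cdepth (φ : Fml Cst Rl ar) : ℕ := φ.consts.ncard

/-- Size of a formula (for termination purposes). -/
def size : Fml Cst Rl ar → ℕ
  | .top => 1
  | .rel _ _ => 1
  | .and φ ψ => φ.size + ψ.size + 1
  | .dia φ => φ.size + 1
  | .all _ φ => φ.size + 1

theorem size_subst (φ : Fml Cst Rl ar) (x : ℕ) (t : ℕ ⊕ Cst) :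
    (φ.subst x t).size = φ.size := by
  induction φ generalizing x t with
  | top => rfl
  | rel S ts => rfl
  | and φ ψ ihφ ihψ => simp [subst, size, ihφ, ihψ]
  | dia φ ih => simp [subst, size, ih]
  | all y φ ih => by_cases h : y = x <;> simp [subst, h, size, ih]

/-- The closure of a formula under a set of constants `C`, where the
subformulas of `∀x φ` are all `φ[x/c]` for `c ∈ C`. -/
def cl (C : Set Cst) : Fml Cst Rl ar → Set (Fml Cst Rl ar)
  | .top => {.top}
  | .rel S ts => {.rel S ts, .top}
  | .and φ ψ => {.and φ ψ} ∪ φ.cl C ∪ ψ.cl C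
  | .dia φ => {.dia φ} ∪ φ.cl C
  | .all x φ => {.all x φ} ∪ ⋃ c ∈ C, (φ.subst x (.inr c)).cl C
termination_by φ => φ.size
decreasing_by all_goals (simp [size, size_subst]; try omega)

/-- Renaming of constants along a map `f` (used for signature extensions). -/
def mapC {Cst' : Type} (f : Cst → Cst') : Fml Cst Rl ar → Fml Cst' Rl ar
  | .top => .top
  | .rel S ts => .rel S (fun i => Sum.map id f (ts i))
  | .and φ ψ => .and (φ.mapC f) (ψ.mapC f)
  | .dia φ => .dia (φ.mapC f)
  | .all x φ => .all x (φ.mapC f)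

/-- Simultaneous substitution of terms for variables. -/
def msubst (σ : ℕ → ℕ ⊕ Cst) : Fml Cst Rl ar → Fml Cst Rl ar
  | .top => .top
  | .rel S ts => .rel S (fun i => match ts i with
      | .inl x => σ x
      | .inr c => .inr c)
  | .and φ ψ => .and (φ.msubst σ) (ψ.msubst σ)
  | .dia φ => .dia (φ.msubst σ)
  | .all x φ => .all x (φ.msubst (Function.update σ x (.inl x)))

/-- `φ^g`: replace every free variable `x` of `φ` by the constant `g x`. -/
def capp (g : ℕ → Cst) (φ : Fml Cst Rl ar) : Fml Cst Rl ar :=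
  φ.msubst (fun x => .inr (g x))

end Fml

/-- The derivability relation `φ ⊢ ψ` of the calculus QRC₁. -/
inductive Der {Cst Rl : Type} {ar : Rl → ℕ} : Fml Cst Rl ar → Fml Cst Rl ar → Prop
  | top (φ) : Der φ .top
  | refl (φ) : Der φ φ
  | andE1 (φ ψ) : Der (.and φ ψ) φ
  | andE2 (φ ψ) : Der (.and φ ψ) ψ
  | andI {φ ψ χ} : Der φ ψ → Der φ χ → Der φ (.and ψ χ)
  | cut {φ ψ χ} : Der φ ψ → Der ψ χ → Der φ χ
  | diaMono {φ ψ} : Der φ ψ → Der (.dia φ) (.dia ψ)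
  | diaTrans (φ) : Der (.dia (.dia φ)) (.dia φ)
  | allI {φ ψ} (x) : Der φ ψ → x ∉ φ.fv → Der φ (.all x ψ)
  | allE {φ ψ} (x) (t : ℕ ⊕ Cst) : Der (φ.subst x t) ψ → Fml.FreeFor t x φ →
      Der (.all x φ) ψ
  | inst {φ ψ} (x) (t : ℕ ⊕ Cst) : Der φ ψ → Fml.FreeFor t x φ → Fml.FreeFor t x ψ →
      Der (φ.subst x t) (ψ.subst x t)
  | genC {φ ψ} (x) (c : Cst) : Der (φ.subst x (.inr c)) (ψ.subst x (.inr c)) →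
      c ∉ φ.consts → c ∉ ψ.consts → Der φ ψ

section Depths

variable {Cst Rl : Type} {ar : Rl → ℕ}

/-- Modal depth of a set of formulas (the supremum of the modal depths). -/
noncomputable def mdepthSet (Γ : Set (Fml Cst Rl ar)) : ℕ := sSup (Fml.mdepth '' Γ)

/-- Quantifier depth of a set of formulas. -/
noncomputable def udepthSet (Γ : Set (Fml Cst Rl ar)) : ℕ := sSup (Fml.udepth '' Γ)

/-- Maximum number of distinct constants per formula in a set of formulas. -/
noncomputable def cdepthSet (Γ : Set (Fml Cst Rl ar)) : ℕ := sSup (Fml.cdepth '' Γ)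

/-- Closure of a set of formulas under a set of constants. -/
def clSet (C : Set Cst) (Γ : Set (Fml Cst Rl ar)) : Set (Fml Cst Rl ar) :=
  ⋃ γ ∈ Γ, γ.cl C

/-- Conjunction of a finite list of formulas. -/
def conjList : List (Fml Cst Rl ar) → Fml Cst Rl ar
  | [] => .top
  | φ :: L => .and φ (conjList L)

end Depths

/-- A pair `⟨p⁺, p⁻⟩` of sets of formulas. -/
structure Pair (Cst Rl : Type) (ar : Rl → ℕ) where
  pos : Set (Fml Cst Rl ar)
  neg : Set (Fml Cst Rl ar)

namespace Pair

variable {Cst Rl : Type} {ar : Rl → ℕ}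

/-- All formulas of the pair are closed. -/
def ClosedP (p : Pair Cst Rl ar) : Prop := ∀ φ ∈ p.pos ∪ p.neg, φ.Closed

/-- Consistency: the conjunction of (finitely many formulas of) `p⁺` does not
derive any formula of `p⁻`. -/
def Consistent (p : Pair Cst Rl ar) : Prop :=
  ∀ δ ∈ p.neg, ∀ L : List (Fml Cst Rl ar), (∀ χ ∈ L, χ ∈ p.pos) → ¬ Der (conjList L) δ

/-- `Φ`-maximality: every formula of `Φ` is in `p⁺` or in `p⁻`, and `p`
contains only formulas of `Φ`. -/
def MaximalIn (Φ : Set (Fml Cst Rl ar)) (p : Pair Cst Rl ar) : Prop :=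
  (∀ χ ∈ Φ, χ ∈ p.pos ∨ χ ∈ p.neg) ∧ p.pos ∪ p.neg ⊆ Φ

/-- Fully witnessed: every negative universal has a constant witness. -/
def FullyWitnessed (p : Pair Cst Rl ar) : Prop :=
  ∀ (x : ℕ) (φ : Fml Cst Rl ar), Fml.all x φ ∈ p.neg →
    ∃ c : Cst, φ.subst x (.inr c) ∈ p.neg

/-- `Φ`-maximal, consistent, fully witnessed (and closed) pair. -/
def MCW (Φ : Set (Fml Cst Rl ar)) (p : Pair Cst Rl ar) : Prop :=
  p.ClosedP ∧ p.MaximalIn Φ ∧ p.Consistent ∧ p.FullyWitnessed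

end Pair

/-- The relation `R̂` between pairs. -/
def hatR {Cst Rl : Type} {ar : Rl → ℕ} (p q : Pair Cst Rl ar) : Prop :=
  (∀ φ : Fml Cst Rl ar, Fml.dia φ ∈ p.neg → φ ∈ q.neg ∧ Fml.dia φ ∈ q.neg) ∧
  ∃ ψ : Fml Cst Rl ar, Fml.dia ψ ∈ p.pos ∧ Fml.dia ψ ∈ q.neg

/-- A relational model for QRC₁. -/
structure Model (Cst Rl : Type) (ar : Rl → ℕ) where
  W : Type
  R : W → W → Prop
  Dom : W → Type
  finDom : ∀ w, Finite (Dom w)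
  η : ∀ w v, R w v → Dom w → Dom v
  I : ∀ w, Cst → Dom w
  J : ∀ w (S : Rl), Set (Fin (ar S) → Dom w)

namespace Model

variable {Cst Rl : Type} {ar : Rl → ℕ} (M : Model Cst Rl ar)

/-- Value of a term under a `w`-assignment. -/
def tval {w : M.W} (g : ℕ → M.Dom w) : ℕ ⊕ Cst → M.Dom w
  | .inl x => g x
  | .inr c => M.I w c

/-- Kripke satisfaction `M, w ⊩^g φ`. -/
def Sat : (w : M.W) → (g : ℕ → M.Dom w) → Fml Cst Rl ar → Prop
  | _, _, .top => True
  | w, g, .rel S ts => (fun i => M.tval g (ts i)) ∈ M.J w S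
  | w, g, .and φ ψ => Sat w g φ ∧ Sat w g ψ
  | w, g, .dia φ => ∃ (v : M.W) (h : M.R w v), Sat v (fun n => M.η w v h (g n)) φ
  | w, g, .all x φ => ∀ h : ℕ → M.Dom w, (∀ y, y ≠ x → h y = g y) → Sat w h φ

/-- Adequate models: transitive accessibility, transitive `η` functions, and
concordant interpretation of constants. -/
structure Adequate : Prop where
  trans : Transitive M.R
  etaTrans : ∀ {w u v : M.W} (h1 : M.R w u) (h2 : M.R u v) (h3 : M.R w v),
    M.η w v h3 = M.η u v h2 ∘ M.η w u h1
  concord : ∀ {w u : M.W} (h : M.R w u) (c : Cst), M.I u c = M.η w u h (M.I w c)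

/-- Constant domain: all worlds have the same domain. -/
def ConstantDomain : Prop := ∀ w v : M.W, M.Dom w = M.Dom v

end Model


/-- The canonical term model built on the MCW pairs (STATEMENT 16 support). -/
def termModel (Cst Rl : Type) (ar : Rl → ℕ) [Finite Cst] (p : Pair Cst Rl ar)
    (R : {w : Pair Cst Rl ar // w.MCW (clSet Set.univ (p.pos ∪ p.neg))} →
         {w : Pair Cst Rl ar // w.MCW (clSet Set.univ (p.pos ∪ p.neg))} → Prop) :
    Model Cst Rl ar where
  W := {w : Pair Cst Rl ar // w.MCW (clSet Set.univ (p.pos ∪ p.neg))}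
  R := R
  Dom := fun _ => Cst
  finDom := fun _ => inferInstance
  η := fun _ _ _ => id
  I := fun _ c => c
  J := fun w S => {d | Fml.rel S (fun i => Sum.inr (d i)) ∈ w.val.pos}

section Aux

variable {Cst Rl : Type} {ar : Rl → ℕ}

theorem Fml.mem_cl_self (C : Set Cst) (φ : Fml Cst Rl ar) : φ ∈ φ.cl C := by
  cases φ <;> simp [Fml.cl]

theorem Fml.cl_trans {C : Set Cst} (φ : Fml Cst Rl ar) :
    ∀ ψ, ψ ∈ φ.cl C → ψ.cl C ⊆ φ.cl C := by
  induction φ using Fml.cl.induct with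
  | case1 =>
    intro ψ hψ
    simp only [Fml.cl, Set.mem_singleton_iff] at hψ
    subst hψ; exact subset_rfl
  | case2 S ts =>
    intro ψ hψ
    simp only [Fml.cl, Set.mem_insert_iff, Set.mem_singleton_iff] at hψ
    rcases hψ with h | h <;> subst h <;> simp [Fml.cl] <;> intro a ha <;> simp_all
  | case3 φ₁ φ₂ ih1 ih2 =>
    intro ψ hψ
    simp only [Fml.cl, Set.mem_union] at hψ
    rcases hψ with (h | h) | h
    · simp only [Set.mem_singleton_iff] at h; subst h; exact subset_rfl
    · exact (ih1 ψ h).trans (fun a ha => by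
        simp only [Fml.cl, Set.mem_union]; exact Or.inl (Or.inr ha))
    · exact (ih2 ψ h).trans (fun a ha => by
        simp only [Fml.cl, Set.mem_union]; exact Or.inr ha)
  | case4 φ₁ ih =>
    intro ψ hψ
    simp only [Fml.cl, Set.mem_union] at hψ
    rcases hψ with h | h
    · simp only [Set.mem_singleton_iff] at h; subst h; exact subset_rfl
    · exact (ih ψ h).trans (fun a ha => by
        simp only [Fml.cl, Set.mem_union]; exact Or.inr ha)
  | case5 x φ₁ ih =>
    intro ψ hψ
    simp only [Fml.cl, Set.mem_union] at hψ
    rcases hψ with h | h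
    · simp only [Set.mem_singleton_iff] at h; subst h; exact subset_rfl
    · simp only [Set.mem_iUnion] at h
      obtain ⟨c, hc, hmem⟩ := h
      refine (ih c ψ hmem).trans (fun a ha => ?_)
      simp only [Fml.cl, Set.mem_union, Set.mem_iUnion]
      exact Or.inr ⟨c, hc, ha⟩

theorem clSet_closed {C : Set Cst} {Γ : Set (Fml Cst Rl ar)} {χ ψ : Fml Cst Rl ar}
    (hχ : χ ∈ clSet C Γ) (hψ : ψ ∈ χ.cl C) : ψ ∈ clSet C Γ := by
  simp only [clSet, Set.mem_iUnion] at hχ ⊢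
  obtain ⟨γ, hγ, hc⟩ := hχ
  exact ⟨γ, hγ, Fml.cl_trans γ χ hc hψ⟩

theorem der_single {φ : Fml Cst Rl ar} : Der (conjList [φ]) φ := Der.andE1 _ _

theorem Pair.MCW.not_both {Φ : Set (Fml Cst Rl ar)} {w : Pair Cst Rl ar}
    (h : w.MCW Φ) {χ : Fml Cst Rl ar} (h1 : χ ∈ w.pos) (h2 : χ ∈ w.neg) : False :=
  h.2.2.1 χ h2 [χ] (by simpa using h1) der_single

theorem Pair.MCW.mem_pos {Φ : Set (Fml Cst Rl ar)} {w : Pair Cst Rl ar}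
    (h : w.MCW Φ) {χ : Fml Cst Rl ar} (hχ : χ ∈ Φ) (L : List (Fml Cst Rl ar))
    (hL : ∀ ψ ∈ L, ψ ∈ w.pos) (hd : Der (conjList L) χ) : χ ∈ w.pos := by
  rcases h.2.1.1 χ hχ with h' | h'
  · exact h'
  · exact absurd hd (h.2.2.1 χ h' L hL)

theorem Fml.freeFor_inr (c : Cst) (x : ℕ) :
    ∀ φ : Fml Cst Rl ar, Fml.FreeFor (.inr c) x φ
  | .top => trivial
  | .rel _ _ => trivial
  | .and φ ψ => ⟨Fml.freeFor_inr c x φ, Fml.freeFor_inr c x ψ⟩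
  | .dia φ => Fml.freeFor_inr c x φ
  | .all _ φ => Or.inr ⟨by simp, Fml.freeFor_inr c x φ⟩

/-- `σ` maps every variable to itself or to a constant. -/
def GoodSub (σ : ℕ → ℕ ⊕ Cst) : Prop := ∀ y, σ y = .inl y ∨ ∃ c, σ y = .inr c

theorem Fml.msubst_subst {σ : ℕ → ℕ ⊕ Cst} (hg : GoodSub σ) {x : ℕ}
    (hx : σ x = .inl x) (c : Cst) (φ : Fml Cst Rl ar) :
    (φ.msubst σ).subst x (.inr c) = φ.msubst (Function.update σ x (.inr c)) := by
  induction φ generalizing σ with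
  | top => rfl
  | rel S ts =>
    simp only [Fml.msubst, Fml.subst, Fml.rel.injEq, heq_eq_eq, true_and]
    funext i
    cases hts : ts i with
    | inr d => rfl
    | inl y =>
      rcases hg y with hy | ⟨d, hy⟩
      · simp only [hy, Fml.substT]
        by_cases hyx : y = x
        · subst hyx; simp [Function.update]
        · simp [hyx, Function.update, hy]
      · have hyx : y ≠ x := by
          intro h; subst h; rw [hx] at hy; exact absurd hy (by simp)
        simp [hy, Fml.substT, Function.update, hyx]
  | and φ ψ ihφ ihψ => simp [Fml.msubst, Fml.subst, ihφ hg hx, ihψ hg hx]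
  | dia φ ih => simp [Fml.msubst, Fml.subst, ih hg hx]
  | all y φ ih =>
    by_cases hyx : y = x
    · subst hyx
      have h1 : Function.update σ y (.inl y) = σ := by
        conv_rhs => rw [← Function.update_eq_self y σ]
        rw [hx]
      simp [Fml.msubst, h1, Fml.subst, Function.update_idem]
    · have hg' : GoodSub (Function.update σ y (.inl y)) := by
        intro z
        by_cases hz : z = y
        · subst hz; simp
        · simp only [Function.update_of_ne hz]; exact hg z
      have hx' : Function.update σ y (.inl y) x = .inl x := by
        rw [Function.update_of_ne (Ne.symm hyx), hx]
      simp only [Fml.msubst, Fml.subst, if_neg hyx, ih hg' hx']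
      rw [Function.update_comm (Ne.symm hyx)]

@[simp] theorem Fml.capp_top {g : ℕ → Cst} :
    (Fml.top : Fml Cst Rl ar).capp g = .top := rfl

@[simp] theorem Fml.capp_and {g : ℕ → Cst} {φ ψ : Fml Cst Rl ar} :
    (Fml.and φ ψ).capp g = .and (φ.capp g) (ψ.capp g) := rfl

@[simp] theorem Fml.capp_dia {g : ℕ → Cst} {φ : Fml Cst Rl ar} :
    (Fml.dia φ).capp g = .dia (φ.capp g) := rfl

theorem Fml.capp_all {g : ℕ → Cst} {x : ℕ} {φ : Fml Cst Rl ar} :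
    (Fml.all x φ).capp g
      = .all x (φ.msubst (Function.update (fun y => Sum.inr (g y)) x (.inl x))) := rfl

theorem Fml.capp_update (g : ℕ → Cst) (x : ℕ) (c : Cst) (φ : Fml Cst Rl ar) :
    (φ.msubst (Function.update (fun y => Sum.inr (g y)) x (.inl x))).subst x (.inr c)
      = φ.capp (Function.update g x c) := by
  rw [Fml.msubst_subst (σ := Function.update (fun y => Sum.inr (g y)) x (.inl x))
      (by intro y; by_cases hy : y = x
          · subst hy; simp
          · simp only [Function.update_of_ne hy]; exact Or.inr ⟨g y, rfl⟩)
      (by simp) c φ]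
  rw [Function.update_idem]
  unfold Fml.capp
  congr 1
  funext y
  by_cases hy : y = x
  · subst hy; simp
  · simp [Function.update_of_ne hy]

end Aux

theorem truth_lemma (Cst Rl : Type) (ar : Rl → ℕ) [Finite Cst]
    (p : Pair Cst Rl ar) (hposfin : p.pos.Finite) (hnegfin : p.neg.Finite)
    (hne : (p.pos ∪ p.neg).Nonempty) (hclosed : p.ClosedP) (hcons : p.Consistent)
    (hsing : ∃ φ₀ : Fml Cst Rl ar, p.pos = {φ₀})
    (hcard : 2 * cdepthSet (p.pos ∪ p.neg) + 2 * udepthSet (p.pos ∪ p.neg)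
      < Nat.card Cst)
    (R : {w : Pair Cst Rl ar // w.MCW (clSet Set.univ (p.pos ∪ p.neg))} →
         {w : Pair Cst Rl ar // w.MCW (clSet Set.univ (p.pos ∪ p.neg))} → Prop)
    (hRhat : ∀ w v, R w v → hatR w.val v.val)
    (hRtrans : Transitive R)
    (hRex : ∀ w (φ : Fml Cst Rl ar), Fml.dia φ ∈ w.val.pos →
      ∃ v, R w v ∧ φ ∈ v.val.pos)
    (w : (termModel Cst Rl ar p R).W) (g : ℕ → Cst) (φ : Fml Cst Rl ar)
    (hφ : φ.capp g ∈ clSet Set.univ (p.pos ∪ p.neg)) :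
    (termModel Cst Rl ar p R).Sat w g φ ↔ φ.capp g ∈ w.val.pos := by
  induction φ generalizing w g with
  | top =>
    simp only [Model.Sat, Fml.capp_top, true_iff]
    exact Pair.MCW.mem_pos w.2 (by simpa using hφ) [] (by simp) (Der.top _)
  | rel S ts =>
    have key : (Fml.rel S ts).capp g
        = Fml.rel S (fun i => Sum.inr ((termModel Cst Rl ar p R).tval (w := w) g (ts i))) := by
      simp only [Fml.capp, Fml.msubst]
      congr 1
      funext i
      cases ts i <;> rfl
    rw [key]
    exact Iff.rfl
  | and φ ψ ihφ ihψ =>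
    rw [Fml.capp_and] at hφ ⊢
    have hφ1 : φ.capp g ∈ clSet Set.univ (p.pos ∪ p.neg) :=
      clSet_closed hφ (by
        simp only [Fml.cl, Set.mem_union]
        exact Or.inl (Or.inr (Fml.mem_cl_self _ _)))
    have hφ2 : ψ.capp g ∈ clSet Set.univ (p.pos ∪ p.neg) :=
      clSet_closed hφ (by
        simp only [Fml.cl, Set.mem_union]
        exact Or.inr (Fml.mem_cl_self _ _))
    simp only [Model.Sat, ihφ w g hφ1, ihψ w g hφ2]
    constructor
    · rintro ⟨h1, h2⟩
      exact Pair.MCW.mem_pos w.2 hφ [φ.capp g, ψ.capp g]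
        (by intro χ hχ; simp at hχ; rcases hχ with h | h <;> subst h <;> assumption)
        (Der.andI (Der.andE1 _ _) (Der.cut (Der.andE2 _ _) (Der.andE1 _ _)))
    · intro h
      exact ⟨Pair.MCW.mem_pos w.2 hφ1 [_] (by simpa using h)
          (Der.cut der_single (Der.andE1 _ _)),
        Pair.MCW.mem_pos w.2 hφ2 [_] (by simpa using h)
          (Der.cut der_single (Der.andE2 _ _))⟩
  | dia φ ih =>
    rw [Fml.capp_dia] at hφ ⊢
    have hφ1 : φ.capp g ∈ clSet Set.univ (p.pos ∪ p.neg) :=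
      clSet_closed hφ (by
        simp only [Fml.cl, Set.mem_union]
        exact Or.inr (Fml.mem_cl_self _ _))
    constructor
    · rintro ⟨v, hR, hs⟩
      have hv : φ.capp g ∈ v.val.pos := (ih v g hφ1).mp hs
      rcases w.2.2.1.1 _ hφ with h | h
      · exact h
      · exact absurd ((hRhat w v hR).1 _ h).1 (fun hn => Pair.MCW.not_both v.2 hv hn)
    · intro h
      obtain ⟨v, hR, hv⟩ := hRex w (φ.capp g) h
      exact ⟨v, hR, (ih v g hφ1).mpr hv⟩
  | all x φ ih =>
    rw [Fml.capp_all] at hφ ⊢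
    have hsub : ∀ c : Cst, φ.capp (Function.update g x c)
        ∈ clSet Set.univ (p.pos ∪ p.neg) := by
      intro c
      refine clSet_closed hφ ?_
      simp only [Fml.cl, Set.mem_union, Set.mem_iUnion]
      exact Or.inr ⟨c, Set.mem_univ c, by
        rw [Fml.capp_update]; exact Fml.mem_cl_self _ _⟩
    constructor
    · intro hs
      rcases w.2.2.1.1 _ hφ with h | h
      · exact h
      · exfalso
        obtain ⟨c, hc⟩ := w.2.2.2.2 x _ h
        rw [Fml.capp_update] at hc
        have hsat : (termModel Cst Rl ar p R).Sat w (Function.update g x c) φ :=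
          hs _ (fun y hy => Function.update_of_ne hy _ _)
        exact Pair.MCW.not_both w.2 ((ih w _ (hsub c)).mp hsat) hc
    · intro hA (h : ℕ → Cst) hagree
      have hfun : h = Function.update g x (h x) := by
        funext y
        by_cases hy : y = x
        · subst hy; simp
        · rw [Function.update_of_ne hy]; exact hagree y hy
      have hmem : φ.capp h ∈ w.val.pos := by
        rw [hfun, ← Fml.capp_update]
        refine Pair.MCW.mem_pos w.2 (by rw [Fml.capp_update]; exact hsub (h x)) [_]
          (by simpa using hA)
          (Der.cut der_single (Der.allE x (.inr (h x)) (Der.refl _)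
            (Fml.freeFor_inr _ _ _)))
      have hΦ : φ.capp h ∈ clSet Set.univ (p.pos ∪ p.neg) := by
        rw [hfun]; exact hsub (h x)
      exact (ih w h hΦ).mpr hmem


end QRC1
end

section
/- For every finite consistent pair p of closed formulas in a signature Σ with p⁺ a singleton, the canonical term model M[p] is an adequate, finite, irreflexive, rooted relational model with constant domain, and at its root w every formula of p⁺ is satisfied while no formula of p⁻ is satisfied (under any assignment, since all formulas of p are closed). -/
namespace QRC1

namespace Fml

variable {Cst Rl : Type} {ar : Rl → ℕ}

/-- Variables of a term. -/
def varsT : ℕ ⊕ Cst → Finset ℕ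
  | .inl x => {x}
  | .inr _ => ∅

/-- Constants of a term. -/
def constsT : ℕ ⊕ Cst → Set Cst
  | .inl _ => ∅
  | .inr c => {c}

/-- All variables (free or binding) of a formula, as a finset. -/
def varsF : Fml Cst Rl ar → Finset ℕ
  | .top => ∅
  | .rel _ ts => Finset.univ.biUnion fun i => varsT (ts i)
  | .and φ ψ => varsF φ ∪ varsF ψ
  | .dia φ => varsF φ
  | .all x φ => insert x (varsF φ)

/-- Binding variables of a formula. -/
def bindersF : Fml Cst Rl ar → Finset ℕ
  | .top => ∅
  | .rel _ _ => ∅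
  | .and φ ψ => bindersF φ ∪ bindersF ψ
  | .dia φ => bindersF φ
  | .all x φ => insert x (bindersF φ)

theorem fv_subset_varsF (φ : Fml Cst Rl ar) : φ.fv ⊆ ↑φ.varsF := by
  induction φ with
  | top => simp [fv, varsF]
  | rel S ts =>
      intro x hx
      obtain ⟨i, hi⟩ := hx
      simp only [varsF, Finset.coe_biUnion, Finset.mem_coe, Finset.mem_univ, Set.mem_iUnion]
      exact ⟨i, trivial, by simp [hi, varsT]⟩
  | and φ ψ ihφ ihψ =>
      intro x hx
      rcases hx with h | h
      · exact Set.mem_of_mem_of_subset (ihφ h) (by simp [varsF])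
      · exact Set.mem_of_mem_of_subset (ihψ h) (by simp [varsF])
  | dia φ ih => exact ih
  | all y φ ih =>
      intro x hx
      have := ih hx.1
      simp only [varsF, Finset.coe_insert, Set.mem_insert_iff]
      exact Or.inr this

theorem bindersF_subset_varsF (φ : Fml Cst Rl ar) : φ.bindersF ⊆ φ.varsF := by
  induction φ with
  | top => simp [bindersF, varsF]
  | rel S ts => simp [bindersF]
  | and φ ψ ihφ ihψ =>
      simp only [bindersF, varsF]
      exact Finset.union_subset_union ihφ ihψ
  | dia φ ih => exact ih
  | all y φ ih =>
      simp only [bindersF, varsF]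
      exact Finset.insert_subset_insert _ ih

theorem subst_eq_of_not_mem_fv {φ : Fml Cst Rl ar} {x : ℕ} (t : ℕ ⊕ Cst)
    (h : x ∉ φ.fv) : φ.subst x t = φ := by
  induction φ with
  | top => rfl
  | rel S ts =>
      simp only [subst, rel.injEq, heq_eq_eq, true_and]
      funext i
      cases hts : ts i with
      | inl y =>
          have hyx : y ≠ x := fun he => h ⟨i, by rw [hts, he]⟩
          simp [substT, hyx]
      | inr c => simp [substT]
  | and φ ψ ihφ ihψ =>
      have : x ∉ φ.fv ∧ x ∉ ψ.fv := by
        constructor <;> intro hc <;> exact h (by first | exact Or.inl hc | exact Or.inr hc)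
      simp [subst, ihφ this.1, ihψ this.2]
  | dia φ ih => simp [subst, ih h]
  | all y φ ih =>
      by_cases hyx : y = x
      · simp [subst, hyx]
      · have : x ∉ φ.fv := fun hc => h ⟨hc, fun he => hyx (by simp at he; omega)⟩
        simp [subst, hyx, ih this]

end Fml
namespace Fml

variable {Cst Rl : Type} {ar : Rl → ℕ}

theorem varsF_subst (φ : Fml Cst Rl ar) (x : ℕ) (t : ℕ ⊕ Cst) :
    (φ.subst x t).varsF ⊆ φ.varsF ∪ varsT t := by
  induction φ generalizing x t with
  | top => simp [subst, varsF]
  | rel S ts =>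
      simp only [subst, varsF]
      intro y hy
      simp only [Finset.mem_biUnion, Finset.mem_univ, true_and] at hy
      obtain ⟨i, hi⟩ := hy
      cases hts : ts i with
      | inl z =>
          rw [hts] at hi
          by_cases hzx : z = x
          · simp only [substT, hzx, if_pos rfl] at hi
            exact Finset.mem_union_right _ hi
          · simp only [substT, if_neg hzx] at hi
            refine Finset.mem_union_left _ ?_
            simp only [Finset.mem_biUnion, Finset.mem_univ, true_and]
            exact ⟨i, by rw [hts]; exact hi⟩
      | inr c => rw [hts] at hi; simp [substT, varsT] at hi
  | and φ ψ ihφ ihψ =>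
      simp only [subst, varsF]
      intro y hy
      rcases Finset.mem_union.1 hy with h | h
      · rcases Finset.mem_union.1 (ihφ x t h) with h' | h'
        · exact Finset.mem_union_left _ (Finset.mem_union_left _ h')
        · exact Finset.mem_union_right _ h'
      · rcases Finset.mem_union.1 (ihψ x t h) with h' | h'
        · exact Finset.mem_union_left _ (Finset.mem_union_right _ h')
        · exact Finset.mem_union_right _ h'
  | dia φ ih => simpa [subst, varsF] using ih x t
  | all y φ ih =>
      by_cases hyx : y = x
      · simp only [subst, if_pos hyx, varsF, hyx]
        intro a ha
        rcases Finset.mem_insert.1 ha with h | h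
        · exact Finset.mem_union_left _ (by simp [h])
        · exact Finset.mem_union_left _ (Finset.mem_insert_of_mem h)
      · simp only [subst, if_neg hyx, varsF]
        intro z hz
        rcases Finset.mem_insert.1 hz with h | h
        · exact Finset.mem_union_left _ (by simp [h])
        · rcases Finset.mem_union.1 (ih x t h) with h' | h'
          · exact Finset.mem_union_left _ (Finset.mem_insert_of_mem h')
          · exact Finset.mem_union_right _ h'

theorem bindersF_subst (φ : Fml Cst Rl ar) (x : ℕ) (t : ℕ ⊕ Cst) :
    (φ.subst x t).bindersF = φ.bindersF := by
  induction φ generalizing x t with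
  | top => rfl
  | rel S ts => rfl
  | and φ ψ ihφ ihψ => simp [subst, bindersF, ihφ, ihψ]
  | dia φ ih => simp [subst, bindersF, ih]
  | all y φ ih =>
      by_cases hyx : y = x <;> simp [subst, hyx, bindersF, ih]

theorem udepth_subst (φ : Fml Cst Rl ar) (x : ℕ) (t : ℕ ⊕ Cst) :
    (φ.subst x t).udepth = φ.udepth := by
  induction φ generalizing x t with
  | top => rfl
  | rel S ts => rfl
  | and φ ψ ihφ ihψ => simp [subst, udepth, ihφ, ihψ]
  | dia φ ih => simp [subst, udepth, ih]
  | all y φ ih =>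
      by_cases hyx : y = x <;> simp [subst, hyx, udepth, ih]

theorem mdepth_subst (φ : Fml Cst Rl ar) (x : ℕ) (t : ℕ ⊕ Cst) :
    (φ.subst x t).mdepth = φ.mdepth := by
  induction φ generalizing x t with
  | top => rfl
  | rel S ts => rfl
  | and φ ψ ihφ ihψ => simp [subst, mdepth, ihφ, ihψ]
  | dia φ ih => simp [subst, mdepth, ih]
  | all y φ ih =>
      by_cases hyx : y = x <;> simp [subst, hyx, mdepth, ih]

theorem fv_subst_subset (φ : Fml Cst Rl ar) (x : ℕ) (t : ℕ ⊕ Cst) :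
    (φ.subst x t).fv ⊆ (φ.fv \ {x}) ∪ ↑(varsT t) := by
  induction φ generalizing x t with
  | top => simp [subst, fv]
  | rel S ts =>
      intro y hy
      obtain ⟨i, hi⟩ := hy
      cases hts : ts i with
      | inl z =>
          simp only [hts] at hi
          by_cases hzx : z = x
          · simp only [substT, hzx, if_pos rfl] at hi
            right; simp [varsT, hi, ← hi]
            cases t with
            | inl u => simp [varsT] at hi ⊢; simp [hi]
            | inr c => simp [varsT] at hi
          · simp only [substT, if_neg hzx] at hi
            injection hi with hzy
            left
            exact ⟨⟨i, by rw [hts, hzy]⟩, by simp [← hzy, hzx]⟩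
      | inr c => simp only [hts] at hi; simp [substT] at hi
  | and φ ψ ihφ ihψ =>
      intro y hy
      rcases hy with h | h
      · rcases ihφ x t h with h' | h'
        · exact Or.inl ⟨Or.inl h'.1, h'.2⟩
        · exact Or.inr h'
      · rcases ihψ x t h with h' | h'
        · exact Or.inl ⟨Or.inr h'.1, h'.2⟩
        · exact Or.inr h'
  | dia φ ih => exact ih x t
  | all z φ ih =>
      by_cases hzx : z = x
      · subst hzx
        simp only [subst, if_pos rfl]
        intro y hy
        exact Or.inl ⟨hy, hy.2⟩
      · simp only [subst, if_neg hzx]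
        intro y hy
        rcases ih x t hy.1 with h' | h'
        · exact Or.inl ⟨⟨h'.1, hy.2⟩, h'.2⟩
        · exact Or.inr h'

theorem consts_subst (φ : Fml Cst Rl ar) (x : ℕ) (t : ℕ ⊕ Cst) :
    (φ.subst x t).consts ⊆ φ.consts ∪ constsT t := by
  induction φ generalizing x t with
  | top => simp [subst, consts]
  | rel S ts =>
      intro c hc
      obtain ⟨i, hi⟩ := hc
      cases hts : ts i with
      | inl z =>
          simp only [hts] at hi
          by_cases hzx : z = x
          · simp only [substT, hzx, if_pos rfl] at hi
            right; cases t with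
            | inl u => simp at hi
            | inr c' => injection hi with h; simp [constsT, h]
          · simp [substT, hzx] at hi
      | inr c' =>
          simp only [hts] at hi
          simp only [substT] at hi
          injection hi with h
          exact Or.inl ⟨i, by rw [hts, h]⟩
  | and φ ψ ihφ ihψ =>
      intro c hc
      rcases hc with h | h
      · rcases ihφ x t h with h' | h'
        · exact Or.inl (Or.inl h')
        · exact Or.inr h'
      · rcases ihψ x t h with h' | h'
        · exact Or.inl (Or.inr h')
        · exact Or.inr h'
  | dia φ ih => exact ih x t
  | all z φ ih =>
      by_cases hzx : z = x
      · simp only [subst, if_pos hzx]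
        intro c hc; exact Or.inl hc
      · simp only [subst, if_neg hzx]
        exact ih x t

theorem consts_finite (φ : Fml Cst Rl ar) : φ.consts.Finite := by
  induction φ with
  | top => simp [consts]
  | rel S ts =>
      have : consts (.rel S ts) = ⋃ i, {c | ts i = Sum.inr c} := by
        ext c; simp [consts]
      rw [this]
      apply Set.finite_iUnion
      intro i
      apply Set.Subsingleton.finite
      intro a ha b hb
      simp only [Set.mem_setOf_eq] at ha hb
      rw [ha] at hb; injection hb
  | and φ ψ ihφ ihψ => exact Set.Finite.union ihφ ihψ
  | dia φ ih => exact ih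
  | all y φ ih => exact ih

end Fml
namespace Fml

variable {Cst Rl : Type} {ar : Rl → ℕ}

theorem freeFor_of_binders {φ : Fml Cst Rl ar} {t : ℕ ⊕ Cst} (x : ℕ)
    (h : ∀ z ∈ φ.bindersF, t ≠ .inl z) : FreeFor t x φ := by
  induction φ with
  | top => trivial
  | rel S ts => trivial
  | and φ ψ ihφ ihψ =>
      exact ⟨ihφ (fun z hz => h z (Finset.mem_union_left _ hz)),
             ihψ (fun z hz => h z (Finset.mem_union_right _ hz))⟩
  | dia φ ih => exact ih h
  | all y φ ih =>
      refine Or.inr ⟨h y (Finset.mem_insert_self _ _), ih ?_⟩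
      exact fun z hz => h z (Finset.mem_insert_of_mem hz)

theorem freeFor_swap {φ : Fml Cst Rl ar} {x y : ℕ} (hxy : x ≠ y)
    (hy : y ∉ φ.varsF) : FreeFor (Sum.inl x : ℕ ⊕ Cst) y (φ.subst x (.inl y)) := by
  induction φ with
  | top => trivial
  | rel S ts => trivial
  | and φ ψ ihφ ihψ =>
      simp only [varsF, Finset.mem_union, not_or] at hy
      exact ⟨ihφ hy.1, ihψ hy.2⟩
  | dia φ ih =>
      exact ih hy
  | all z φ ih =>
      simp only [varsF, Finset.mem_insert, not_or] at hy
      by_cases hzx : z = x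
      · subst hzx
        simp only [subst, if_pos rfl]
        left
        intro hc
        exact hy.2 (fv_subset_varsF φ hc.1)
      · simp only [subst, if_neg hzx]
        refine Or.inr ⟨by simp [Ne.symm hzx], ih hy.2⟩

theorem subst_swap {φ : Fml Cst Rl ar} {x y : ℕ} (hxy : x ≠ y)
    (hy : y ∉ φ.varsF) : (φ.subst x (.inl y)).subst y (.inl x) = φ := by
  induction φ with
  | top => rfl
  | rel S ts =>
      simp only [subst, rel.injEq, heq_eq_eq, true_and]
      funext i
      cases hts : ts i with
      | inl z =>
          by_cases hzx : z = x
          · simp [substT, hzx]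
          · have hzy : z ≠ y := by
              intro hc
              apply hy
              simp only [varsF, Finset.mem_biUnion, Finset.mem_univ, true_and]
              exact ⟨i, by simp [hts, varsT, hc]⟩
            simp [substT, hzx, hzy]
      | inr c => simp [substT]
  | and φ ψ ihφ ihψ =>
      simp only [varsF, Finset.mem_union, not_or] at hy
      simp [subst, ihφ hy.1, ihψ hy.2]
  | dia φ ih => simp [subst, ih hy]
  | all z φ ih =>
      simp only [varsF, Finset.mem_insert, not_or] at hy
      have hzy : z ≠ y := fun hc => hy.1 hc.symm
      by_cases hzx : z = x
      · subst hzx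
        simp only [subst, if_pos rfl, if_neg hzy, ↓reduceIte]
        rw [subst_eq_of_not_mem_fv]
        intro hc
        exact hy.2 (fv_subset_varsF φ hc)
      · simp only [subst, if_neg hzx, if_neg hzy]
        rw [ih hy.2]

end Fml

theorem der_mdepth {Cst Rl : Type} {ar : Rl → ℕ} {φ ψ : Fml Cst Rl ar}
    (h : Der φ ψ) : ψ.mdepth ≤ φ.mdepth := by
  induction h with
  | top _ => simp [Fml.mdepth]
  | refl _ => exact le_refl _
  | andE1 φ ψ => exact le_max_left _ _
  | andE2 φ ψ => exact le_max_right _ _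
  | andI h1 h2 ih1 ih2 => exact max_le ih1 ih2
  | cut h1 h2 ih1 ih2 => exact le_trans ih2 ih1
  | diaMono h ih => simpa [Fml.mdepth] using ih
  | diaTrans φ => simp [Fml.mdepth]
  | allI x h hx ih => simpa [Fml.mdepth] using ih
  | allE x t h hff ih =>
      simpa [Fml.mdepth, Fml.mdepth_subst] using ih
  | inst x t h hff1 hff2 ih => simpa [Fml.mdepth_subst] using ih
  | genC x c h hc1 hc2 ih => simpa [Fml.mdepth_subst] using ih

theorem der_alpha {Cst Rl : Type} {ar : Rl → ℕ} {φ : Fml Cst Rl ar} {x y : ℕ}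
    (hxy : x ≠ y) (hy : y ∉ φ.varsF) :
    Der (.all y (φ.subst x (.inl y))) (.all x φ) := by
  have h1 : Der ((φ.subst x (.inl y)).subst y (.inl x)) φ := by
    rw [Fml.subst_swap hxy hy]; exact Der.refl _
  have h2 : Der (.all y (φ.subst x (.inl y))) φ :=
    Der.allE y (.inl x) h1 (Fml.freeFor_swap hxy hy)
  apply Der.allI x h2
  intro hc
  rcases hc with ⟨hc1, hc2⟩
  rcases Fml.fv_subst_subset φ x (.inl y) hc1 with h | h
  · exact h.2 rfl
  · simp [Fml.varsT] at h
    exact hc2 (by simp [h])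
namespace Fml

variable {Cst Rl : Type} {ar : Rl → ℕ}

/-- Closure of a formula under instantiation by terms of `D`, as a list. -/
def clL (D : List (ℕ ⊕ Cst)) : Fml Cst Rl ar → List (Fml Cst Rl ar)
  | .top => [.top]
  | .rel S ts => [.rel S ts]
  | .and φ ψ => .and φ ψ :: (clL D φ ++ clL D ψ)
  | .dia φ => .dia φ :: clL D φ
  | .all x φ => .all x φ :: D.flatMap (fun t => clL D (φ.subst x t))
termination_by φ => φ.size
decreasing_by all_goals (simp [size, size_subst]; try omega)

theorem mem_clL_self (D : List (ℕ ⊕ Cst)) (φ : Fml Cst Rl ar) : φ ∈ clL D φ := by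
  cases φ <;> simp [clL]

theorem size_pos (φ : Fml Cst Rl ar) : 0 < φ.size := by
  cases φ <;> simp [size] <;> omega

theorem clL_trans_aux (D : List (ℕ ⊕ Cst)) :
    ∀ n (θ : Fml Cst Rl ar), θ.size ≤ n → ∀ χ ∈ clL D θ, clL D χ ⊆ clL D θ := by
  intro n
  induction n with
  | zero => intro θ hθ; have := size_pos θ; omega
  | succ n ih =>
      intro θ hθ χ hχ
      cases θ with
      | top =>
          simp only [clL, List.mem_singleton] at hχ
          subst hχ; exact fun a ha => ha
      | rel S ts =>
          simp only [clL, List.mem_singleton] at hχ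
          subst hχ; exact fun a ha => ha
      | and φ ψ =>
          simp only [clL, List.mem_cons, List.mem_append] at hχ
          rcases hχ with h | h | h
          · subst h; exact fun a ha => ha
          · intro a ha
            have h1 : a ∈ clL D φ := ih φ (by simp [size] at hθ ⊢; omega) χ h ha
            simp only [clL, List.mem_cons, List.mem_append]
            exact Or.inr (Or.inl h1)
          · intro a ha
            have h1 : a ∈ clL D ψ := ih ψ (by simp [size] at hθ ⊢; omega) χ h ha
            simp only [clL, List.mem_cons, List.mem_append]
            exact Or.inr (Or.inr h1)
      | dia φ =>
          simp only [clL, List.mem_cons] at hχ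
          rcases hχ with h | h
          · subst h; exact fun a ha => ha
          · intro a ha
            have h1 : a ∈ clL D φ := ih φ (by simp [size] at hθ; omega) χ h ha
            simp only [clL, List.mem_cons]
            exact Or.inr h1
      | all x φ =>
          simp only [clL, List.mem_cons, List.mem_flatMap] at hχ
          rcases hχ with h | ⟨t, ht, h⟩
          · subst h; exact fun a ha => ha
          · intro a ha
            have h1 : a ∈ clL D (φ.subst x t) :=
              ih (φ.subst x t) (by simp [size, size_subst] at hθ ⊢; omega) χ h ha
            simp only [clL, List.mem_cons, List.mem_flatMap]
            exact Or.inr ⟨t, ht, h1⟩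

theorem clL_trans {D : List (ℕ ⊕ Cst)} {θ χ : Fml Cst Rl ar}
    (h : χ ∈ clL D θ) : clL D χ ⊆ clL D θ :=
  clL_trans_aux D θ.size θ (le_refl _) χ h

theorem clL_and_left {D : List (ℕ ⊕ Cst)} {θ φ ψ : Fml Cst Rl ar}
    (h : .and φ ψ ∈ clL D θ) : φ ∈ clL D θ :=
  clL_trans h (by simp only [clL, List.mem_cons, List.mem_append]
                  exact Or.inr (Or.inl (mem_clL_self D φ)))

theorem clL_and_right {D : List (ℕ ⊕ Cst)} {θ φ ψ : Fml Cst Rl ar}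
    (h : .and φ ψ ∈ clL D θ) : ψ ∈ clL D θ :=
  clL_trans h (by simp only [clL, List.mem_cons, List.mem_append]
                  exact Or.inr (Or.inr (mem_clL_self D ψ)))

theorem clL_dia {D : List (ℕ ⊕ Cst)} {θ φ : Fml Cst Rl ar}
    (h : .dia φ ∈ clL D θ) : φ ∈ clL D θ :=
  clL_trans h (by simp only [clL, List.mem_cons]
                  exact Or.inr (mem_clL_self D φ))

theorem clL_all {D : List (ℕ ⊕ Cst)} {θ φ : Fml Cst Rl ar} {x : ℕ} {t : ℕ ⊕ Cst}
    (h : .all x φ ∈ clL D θ) (ht : t ∈ D) : φ.subst x t ∈ clL D θ :=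
  clL_trans h (by simp only [clL, List.mem_cons, List.mem_flatMap]
                  exact Or.inr ⟨t, ht, mem_clL_self D _⟩)

/-- Transport of invariants along the closure. -/
theorem clL_spec {D : List (ℕ ⊕ Cst)} (P : Fml Cst Rl ar → Prop)
    (hand : ∀ φ ψ, P (.and φ ψ) → P φ ∧ P ψ)
    (hdia : ∀ φ, P (.dia φ) → P φ)
    (hall : ∀ x φ t, t ∈ D → P (.all x φ) → P (φ.subst x t)) :
    ∀ n (θ : Fml Cst Rl ar), θ.size ≤ n → P θ → ∀ χ ∈ clL D θ, P χ := by
  intro n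
  induction n with
  | zero => intro θ hθ; have := size_pos θ; omega
  | succ n ih =>
      intro θ hθ hP χ hχ
      cases θ with
      | top => simp only [clL, List.mem_singleton] at hχ; subst hχ; exact hP
      | rel S ts => simp only [clL, List.mem_singleton] at hχ; subst hχ; exact hP
      | and φ ψ =>
          simp only [clL, List.mem_cons, List.mem_append] at hχ
          rcases hχ with h | h | h
          · subst h; exact hP
          · exact ih φ (by simp [size] at hθ ⊢; omega) (hand _ _ hP).1 χ h
          · exact ih ψ (by simp [size] at hθ ⊢; omega) (hand _ _ hP).2 χ h
      | dia φ =>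
          simp only [clL, List.mem_cons] at hχ
          rcases hχ with h | h
          · subst h; exact hP
          · exact ih φ (by simp [size] at hθ; omega) (hdia _ hP) χ h
      | all x φ =>
          simp only [clL, List.mem_cons, List.mem_flatMap] at hχ
          rcases hχ with h | ⟨t, ht, h⟩
          · subst h; exact hP
          · exact ih (φ.subst x t) (by simp [size, size_subst] at hθ ⊢; omega)
              (hall _ _ _ ht hP) χ h

theorem clL_spec' {D : List (ℕ ⊕ Cst)} (P : Fml Cst Rl ar → Prop)
    (hand : ∀ φ ψ, P (.and φ ψ) → P φ ∧ P ψ)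
    (hdia : ∀ φ, P (.dia φ) → P φ)
    (hall : ∀ x φ t, t ∈ D → P (.all x φ) → P (φ.subst x t))
    {θ χ : Fml Cst Rl ar} (hP : P θ) (hχ : χ ∈ clL D θ) : P χ :=
  clL_spec P hand hdia hall θ.size θ (le_refl _) hP χ hχ

end Fml
section SatLemmas

variable {Cst Rl : Type} {ar : Rl → ℕ}

theorem sat_agree (M : Model Cst Rl ar) (φ : Fml Cst Rl ar) :
    ∀ (w : M.W) (g h : ℕ → M.Dom w), (∀ y ∈ φ.fv, g y = h y) →
      (M.Sat w g φ ↔ M.Sat w h φ) := by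
  induction φ with
  | top => intro w g h _; simp [Model.Sat]
  | rel S ts =>
      intro w g h hg
      have : (fun i => M.tval g (ts i)) = (fun i => M.tval h (ts i)) := by
        funext i
        cases hts : ts i with
        | inl y => simp only [Model.tval]; exact hg y ⟨i, hts⟩
        | inr c => simp only [Model.tval]
      simp only [Model.Sat, this]
  | and φ ψ ihφ ihψ =>
      intro w g h hg
      have h1 := ihφ w g h (fun y hy => hg y (Or.inl hy))
      have h2 := ihψ w g h (fun y hy => hg y (Or.inr hy))
      simp only [Model.Sat, h1, h2]
  | dia φ ih =>
      intro w g h hg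
      simp only [Model.Sat]
      constructor <;> rintro ⟨v, hR, hs⟩ <;> refine ⟨v, hR, ?_⟩
      · exact (ih v _ _ (fun y hy => by rw [hg y hy])).mp hs
      · exact (ih v _ _ (fun y hy => by rw [hg y hy])).mpr hs
  | all x φ ih =>
      intro w g h hg
      simp only [Model.Sat]
      constructor <;> intro hs h' hagree
      · have hs' := hs (fun y => if y = x then h' x else g y)
          (fun y hy => by simp [hy])
        refine (ih w _ h' ?_).mp hs'
        intro y hy
        by_cases hyx : y = x
        · simp [hyx]
        · simp only [if_neg hyx]
          rw [hg y ⟨hy, hyx⟩, hagree y hyx]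
      · have hs' := hs (fun y => if y = x then h' x else h y)
          (fun y hy => by simp [hy])
        refine (ih w _ h' ?_).mp hs'
        intro y hy
        by_cases hyx : y = x
        · simp [hyx]
        · simp only [if_neg hyx]
          rw [hagree y hyx]
          exact (hg y ⟨hy, hyx⟩).symm

end SatLemmas

section TModel

variable {Cst Rl : Type} {ar : Rl → ℕ}

open Classical in
/-- The term model built from a root formula `φ₀` and a list of domain terms `D`. -/
noncomputable def TM (φ₀ : Fml Cst Rl ar) (D : List (ℕ ⊕ Cst)) (d₀ : ℕ ⊕ Cst)
    (hd₀ : d₀ ∈ D) : Model Cst Rl ar where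
  W := {χ : Fml Cst Rl ar // χ ∈ Fml.clL D φ₀ ∧ (χ = φ₀ ∨ Der φ₀ (.dia χ))}
  R w v := Der w.1 (.dia v.1)
  Dom _ := {t : ℕ ⊕ Cst // t ∈ D}
  finDom _ := by
    have : {t : ℕ ⊕ Cst | t ∈ D}.Finite := D.finite_toSet
    exact this.to_subtype
  η _ _ _ := id
  I _ c := @dite _ (Sum.inr c ∈ D) (Classical.dec _) (fun h => ⟨Sum.inr c, h⟩) (fun _ => ⟨d₀, hd₀⟩)
  J w S := {tuple | Der w.1 (.rel S (fun i => (tuple i).1))}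

open Classical in
/-- The standard assignment. -/
noncomputable def gstar (D : List (ℕ ⊕ Cst)) (d₀ : ℕ ⊕ Cst) (hd₀ : d₀ ∈ D) :
    ℕ → {t : ℕ ⊕ Cst // t ∈ D} :=
  fun y => @dite _ (Sum.inl y ∈ D) (Classical.dec _) (fun h => ⟨Sum.inl y, h⟩) (fun _ => ⟨d₀, hd₀⟩)

end TModel
section TModel2

variable {Cst Rl : Type} {ar : Rl → ℕ}

/-- Term evaluation in the term model, independent of the world. -/
noncomputable def tmval (D : List (ℕ ⊕ Cst)) (d₀ : ℕ ⊕ Cst) (hd₀ : d₀ ∈ D)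
    (g : ℕ → {t : ℕ ⊕ Cst // t ∈ D}) : ℕ ⊕ Cst → {t : ℕ ⊕ Cst // t ∈ D}
  | .inl y => g y
  | .inr c => @dite _ (Sum.inr c ∈ D) (Classical.dec _) (fun h => ⟨Sum.inr c, h⟩)
      (fun _ => ⟨d₀, hd₀⟩)

theorem TM_tval (φ₀ : Fml Cst Rl ar) (D : List (ℕ ⊕ Cst)) (d₀ : ℕ ⊕ Cst)
    (hd₀ : d₀ ∈ D) (w : (TM φ₀ D d₀ hd₀).W) (g : ℕ → {t : ℕ ⊕ Cst // t ∈ D})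
    (t : ℕ ⊕ Cst) :
    (TM φ₀ D d₀ hd₀).tval (w := w) g t = tmval D d₀ hd₀ g t := by
  cases t <;> rfl

theorem tmval_agree (D : List (ℕ ⊕ Cst)) (d₀ : ℕ ⊕ Cst) (hd₀ : d₀ ∈ D)
    {g h : ℕ → {t : ℕ ⊕ Cst // t ∈ D}} {t : ℕ ⊕ Cst}
    (hgh : ∀ y, t = Sum.inl y → g y = h y) :
    tmval D d₀ hd₀ g t = tmval D d₀ hd₀ h t := by
  cases t with
  | inl y => exact hgh y rfl
  | inr c => rfl

theorem sat_subst (φ₀ : Fml Cst Rl ar) (D : List (ℕ ⊕ Cst)) (d₀ : ℕ ⊕ Cst)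
    (hd₀ : d₀ ∈ D) (φ : Fml Cst Rl ar) :
    ∀ (x : ℕ) (t : ℕ ⊕ Cst), Fml.FreeFor t x φ →
    ∀ (w : (TM φ₀ D d₀ hd₀).W) (g : ℕ → {t : ℕ ⊕ Cst // t ∈ D}),
    ((TM φ₀ D d₀ hd₀).Sat w g (φ.subst x t) ↔
     (TM φ₀ D d₀ hd₀).Sat w
       (fun y => if y = x then tmval D d₀ hd₀ g t else g y) φ) := by
  induction φ with
  | top => intro x t _ w g; simp [Fml.subst, Model.Sat]
  | rel S ts =>
      intro x t _ w g
      have key : (fun i => (TM φ₀ D d₀ hd₀).tval (w := w) g (Fml.substT x t (ts i))) =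
          (fun i => (TM φ₀ D d₀ hd₀).tval (w := w)
            (fun y => if y = x then tmval D d₀ hd₀ g t else g y) (ts i)) := by
        funext i
        cases hts : ts i with
        | inl y =>
            by_cases hyx : y = x
            · simp only [Fml.substT, if_pos hyx, Model.tval, if_pos hyx]
              exact (TM_tval φ₀ D d₀ hd₀ w g t).trans (if_pos hyx).symm
            · simp only [Fml.substT, if_neg hyx, Model.tval, if_neg hyx]
              exact (if_neg hyx).symm
        | inr c => simp only [Fml.substT, Model.tval]
      simp only [Fml.subst, Model.Sat]
      rw [key]
  | and φ ψ ihφ ihψ =>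
      intro x t hff w g
      simp only [Fml.subst, Model.Sat]
      rw [ihφ x t hff.1 w g, ihψ x t hff.2 w g]
  | dia φ ih =>
      intro x t hff w g
      simp only [Fml.subst, Model.Sat]
      constructor <;> rintro ⟨v, hR, hs⟩ <;> refine ⟨v, hR, ?_⟩
      · exact (ih x t hff v g).mp hs
      · exact (ih x t hff v g).mpr hs
  | all z φ ih =>
      intro x t hff w g
      by_cases hzx : z = x
      · subst hzx
        simp only [Fml.subst, if_pos rfl]
        apply sat_agree
        intro y hy
        have hyz : y ≠ z := fun hc => hy.2 (by simp [hc])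
        exact (if_neg hyz).symm
      · simp only [Fml.subst, if_neg hzx]
        have hff' : x ∉ (Fml.all z φ).fv ∨ (t ≠ .inl z ∧ Fml.FreeFor t x φ) := hff
        rcases hff' with hA | ⟨hB1, hB2⟩
        · have hxφ : x ∉ φ.fv := fun hc => hA ⟨hc, fun he => hzx (by simp at he; omega)⟩
          rw [Fml.subst_eq_of_not_mem_fv t hxφ]
          apply sat_agree
          intro y hy
          have hyx : y ≠ x := by
            rintro rfl
            exact hA hy
          exact (if_neg hyx).symm
        · have htv : ∀ h : ℕ → {t : ℕ ⊕ Cst // t ∈ D}, (∀ y, y ≠ z → h y = g y) →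
              tmval D d₀ hd₀ h t = tmval D d₀ hd₀ g t := by
            intro h hh
            apply tmval_agree
            intro y hty
            apply hh
            rintro rfl
            exact hB1 hty
          constructor
          · intro hs h' hagree'
            have hh : ∀ y, y ≠ z → (fun y => if y = z then h' z else g y) y = g y := by
              intro y hy; exact if_neg hy
            have h1 := hs (fun y => if y = z then h' z else g y) hh
            have h2 := (ih x t hB2 w _).mp h1
            refine (sat_agree _ φ w _ h' ?_).mp h2
            intro y hy
            by_cases hyx : y = x
            · subst hyx
              have hyz : y ≠ z := fun hc => hzx hc.symm
              refine (if_pos rfl).trans ?_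
              rw [htv _ hh, hagree' y hyz]
              exact (if_pos rfl).symm
            · refine (if_neg hyx).trans ?_
              by_cases hyz : y = z
              · rw [hyz]; exact if_pos rfl
              · refine (if_neg hyz).trans ?_
                have h3 := (hagree' y hyz).trans (if_neg hyx)
                exact h3.symm
          · intro hs h hh
            apply (ih x t hB2 w h).mpr
            have hagree'' : ∀ y, y ≠ z →
                (fun y => if y = x then tmval D d₀ hd₀ h t else h y) y =
                (fun y => if y = x then tmval D d₀ hd₀ g t else g y) y := by
              intro y hy
              by_cases hyx : y = x
              · exact (if_pos hyx).trans ((htv h hh).trans (if_pos hyx).symm)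
              · exact (if_neg hyx).trans ((hh y hy).trans (if_neg hyx).symm)
            exact hs _ hagree''

end TModel2
section Closure

variable {Cst Rl : Type} {ar : Rl → ℕ}
variable (φ₀ : Fml Cst Rl ar) (D : List (ℕ ⊕ Cst)) (m K : ℕ)

theorem cl_fv (hfv0 : φ₀.fv = ∅) :
    ∀ χ ∈ Fml.clL D φ₀, ↑χ.fv ⊆ {y : ℕ | Sum.inl y ∈ D} := by
  intro χ hχ
  refine Fml.clL_spec' (fun χ => ↑χ.fv ⊆ {y : ℕ | Sum.inl y ∈ D}) ?_ ?_ ?_ ?_ hχ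
  · intro φ ψ h
    exact ⟨fun y hy => h (Or.inl hy), fun y hy => h (Or.inr hy)⟩
  · intro φ h; exact h
  · intro x φ t ht h y hy
    rcases Fml.fv_subst_subset φ x t hy with h' | h'
    · exact h h'
    · cases t with
      | inl u => simp [Fml.varsT] at h'; simpa [h'] using ht
      | inr c => simp [Fml.varsT] at h'
  · show ↑φ₀.fv ⊆ {y : ℕ | Sum.inl y ∈ D}
    rw [hfv0]; exact Set.empty_subset _

theorem cl_consts (hc0 : φ₀.consts ⊆ {c : Cst | Sum.inr c ∈ D}) :
    ∀ χ ∈ Fml.clL D φ₀, χ.consts ⊆ {c : Cst | Sum.inr c ∈ D} := by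
  intro χ hχ
  refine Fml.clL_spec' (fun χ => χ.consts ⊆ {c : Cst | Sum.inr c ∈ D}) ?_ ?_ ?_ hc0 hχ
  · intro φ ψ h
    exact ⟨fun c hc => h (Or.inl hc), fun c hc => h (Or.inr hc)⟩
  · intro φ h; exact h
  · intro x φ t ht h c hc
    rcases Fml.consts_subst φ x t hc with h' | h'
    · exact h h'
    · cases t with
      | inl u => simp [Fml.constsT] at h'
      | inr c' => simp [Fml.constsT] at h'; simpa [h'] using ht

theorem cl_binders (hv0 : ∀ z ∈ φ₀.varsF, z < m) :
    ∀ χ ∈ Fml.clL D φ₀, ∀ z ∈ χ.bindersF, z < m := by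
  intro χ hχ
  refine Fml.clL_spec' (fun χ => ∀ z ∈ χ.bindersF, z < m) ?_ ?_ ?_ ?_ hχ
  · intro φ ψ h
    exact ⟨fun z hz => h z (Finset.mem_union_left _ hz),
           fun z hz => h z (Finset.mem_union_right _ hz)⟩
  · intro φ h; exact h
  · intro x φ t ht h z hz
    rw [Fml.bindersF_subst] at hz
    exact h z (Finset.mem_insert_of_mem hz)
  · intro z hz
    exact hv0 z (Fml.bindersF_subset_varsF φ₀ hz)

theorem cl_card (hDvar : ∀ t ∈ D, (Fml.varsT t : Finset ℕ).card ≤ 1)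
    (hv0 : ∀ z ∈ φ₀.varsF, z < m) :
    ∀ χ ∈ Fml.clL D φ₀,
      (χ.varsF ∩ Finset.Ico m (m + K)).card + χ.udepth ≤ φ₀.udepth := by
  intro χ hχ
  refine Fml.clL_spec'
    (fun χ => (χ.varsF ∩ Finset.Ico m (m + K)).card + χ.udepth ≤ φ₀.udepth)
    ?_ ?_ ?_ ?_ hχ
  · intro φ ψ h
    constructor
    · have h1 : (φ.varsF ∩ Finset.Ico m (m + K)).card ≤
          ((Fml.and φ ψ).varsF ∩ Finset.Ico m (m + K)).card :=
        Finset.card_le_card (Finset.inter_subset_inter Finset.subset_union_left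
          (Finset.Subset.refl _))
      have h2 : φ.udepth ≤ (Fml.and φ ψ).udepth := le_max_left _ _
      omega
    · have h1 : (ψ.varsF ∩ Finset.Ico m (m + K)).card ≤
          ((Fml.and φ ψ).varsF ∩ Finset.Ico m (m + K)).card :=
        Finset.card_le_card (Finset.inter_subset_inter Finset.subset_union_right
          (Finset.Subset.refl _))
      have h2 : ψ.udepth ≤ (Fml.and φ ψ).udepth := le_max_right _ _
      omega
  · intro φ h; exact h
  · intro x φ t ht h
    have hsub : (φ.subst x t).varsF ∩ Finset.Ico m (m + K) ⊆
        ((Fml.all x φ).varsF ∩ Finset.Ico m (m + K)) ∪ Fml.varsT t := by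
      intro a ha
      rcases Finset.mem_inter.1 ha with ⟨ha1, ha2⟩
      rcases Finset.mem_union.1 (Fml.varsF_subst φ x t ha1) with h' | h'
      · exact Finset.mem_union_left _
          (Finset.mem_inter.2 ⟨Finset.mem_insert_of_mem h', ha2⟩)
      · exact Finset.mem_union_right _ h'
    have hcard : ((φ.subst x t).varsF ∩ Finset.Ico m (m + K)).card ≤
        ((Fml.all x φ).varsF ∩ Finset.Ico m (m + K)).card + 1 := by
      calc ((φ.subst x t).varsF ∩ Finset.Ico m (m + K)).card
          ≤ (((Fml.all x φ).varsF ∩ Finset.Ico m (m + K)) ∪ Fml.varsT t).card :=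
            Finset.card_le_card hsub
        _ ≤ ((Fml.all x φ).varsF ∩ Finset.Ico m (m + K)).card + (Fml.varsT t).card :=
            Finset.card_union_le _ _
        _ ≤ _ := by have := hDvar t ht; omega
    have hud : (φ.subst x t).udepth = φ.udepth := Fml.udepth_subst φ x t
    have : (Fml.all x φ).udepth = φ.udepth + 1 := rfl
    omega
  · have : φ₀.varsF ∩ Finset.Ico m (m + K) = ∅ := by
      ext a
      simp only [Finset.mem_inter, Finset.mem_Ico, Finset.notMem_empty, iff_false, not_and]
      intro ha
      have := hv0 a ha
      omega
    show (φ₀.varsF ∩ Finset.Ico m (m + K)).card + φ₀.udepth ≤ φ₀.udepth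
    rw [this]
    simp

theorem fresh_exists (A B : Finset ℕ)
    (h : (A ∩ Finset.Ico m (m + K)).card + (B ∩ Finset.Ico m (m + K)).card < K) :
    ∃ y, (m ≤ y ∧ y < m + K) ∧ y ∉ A ∧ y ∉ B := by
  have hco : (Finset.Ico m (m + K) \ (A ∪ B)).Nonempty := by
    apply Finset.card_pos.mp
    have hsub : Finset.Ico m (m + K) \ (A ∪ B) =
        Finset.Ico m (m + K) \ ((A ∪ B) ∩ Finset.Ico m (m + K)) := by
      ext a
      simp only [Finset.mem_sdiff, Finset.mem_inter, Finset.mem_union]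
      tauto
    rw [hsub, Finset.card_sdiff_of_subset Finset.inter_subset_right]
    have h1 : ((A ∪ B) ∩ Finset.Ico m (m + K)).card ≤
        (A ∩ Finset.Ico m (m + K)).card + (B ∩ Finset.Ico m (m + K)).card := by
      rw [Finset.union_inter_distrib_right]
      exact Finset.card_union_le _ _
    have h2 : (Finset.Ico m (m + K)).card = K := by simp
    omega
  obtain ⟨y, hy⟩ := hco
  simp only [Finset.mem_sdiff, Finset.mem_Ico, Finset.mem_union, not_or] at hy
  exact ⟨y, hy.1, hy.2.1, hy.2.2⟩

end Closure

theorem der_dia_trans {Cst Rl : Type} {ar : Rl → ℕ} {a b c : Fml Cst Rl ar}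
    (h1 : Der a (.dia b)) (h2 : Der b (.dia c)) : Der a (.dia c) :=
  Der.cut h1 (Der.cut (Der.diaMono h2) (Der.diaTrans _))
section Truth

variable {Cst Rl : Type} {ar : Rl → ℕ}
variable (φ₀ : Fml Cst Rl ar) (D : List (ℕ ⊕ Cst)) (d₀ : ℕ ⊕ Cst) (hd₀ : d₀ ∈ D)
variable (m K : ℕ)

open Classical in
theorem tmval_gstar (d : {t : ℕ ⊕ Cst // t ∈ D}) :
    tmval D d₀ hd₀ (gstar D d₀ hd₀) d.1 = d := by
  obtain ⟨t, ht⟩ := d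
  cases t with
  | inl y =>
      simp only [tmval, gstar]
      apply Subtype.ext
      rw [dif_pos ht]
  | inr c =>
      simp only [tmval]
      apply Subtype.ext
      rw [dif_pos ht]

theorem truthL1 (hDv : ∀ y : ℕ, Sum.inl y ∈ D ↔ (m ≤ y ∧ y < m + K))
    (hfv0 : φ₀.fv = ∅) (hc0 : φ₀.consts ⊆ {c : Cst | Sum.inr c ∈ D})
    (hv0 : ∀ z ∈ φ₀.varsF, z < m) :
    ∀ n (χ : Fml Cst Rl ar), χ.size ≤ n → χ ∈ Fml.clL D φ₀ →
    ∀ w : (TM φ₀ D d₀ hd₀).W, Der w.1 χ →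
      (TM φ₀ D d₀ hd₀).Sat w (gstar D d₀ hd₀) χ := by
  intro n
  induction n with
  | zero => intro χ hsz; have := Fml.size_pos χ; omega
  | succ n ih =>
      intro χ hsz hχ w hDer
      cases χ with
      | top => simp [Model.Sat]
      | rel S ts =>
          have hfv := cl_fv φ₀ D hfv0 _ hχ
          have hcs := cl_consts φ₀ D hc0 _ hχ
          have key : (fun i =>
              ((TM φ₀ D d₀ hd₀).tval (w := w) (gstar D d₀ hd₀) (ts i)).1) = ts := by
            funext i
            cases hts : ts i with
            | inl y =>
                have hyD : Sum.inl y ∈ D := hfv ⟨i, hts⟩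
                rw [TM_tval]
                simp only [tmval, gstar]
                rw [dif_pos hyD]
            | inr c =>
                have hcD : Sum.inr c ∈ D := hcs ⟨i, hts⟩
                rw [TM_tval]
                simp only [tmval]
                rw [dif_pos hcD]
          simp only [Model.Sat]
          show Der w.1 (.rel S fun i =>
            ((TM φ₀ D d₀ hd₀).tval (w := w) (gstar D d₀ hd₀) (ts i)).1)
          rw [key]
          exact hDer
      | and φ ψ =>
          simp only [Model.Sat]
          have hsz' : φ.size ≤ n ∧ ψ.size ≤ n := by
            simp only [Fml.size] at hsz; omega
          exact ⟨ih φ hsz'.1 (Fml.clL_and_left hχ) w (Der.cut hDer (Der.andE1 _ _)),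
                 ih ψ hsz'.2 (Fml.clL_and_right hχ) w (Der.cut hDer (Der.andE2 _ _))⟩
      | dia φ =>
          have hφcl : φ ∈ Fml.clL D φ₀ := Fml.clL_dia hχ
          have hroot : Der φ₀ (.dia φ) := by
            rcases w.2.2 with he | hd
            · exact he ▸ hDer
            · exact der_dia_trans hd hDer
          have hsz' : φ.size ≤ n := by simp only [Fml.size] at hsz; omega
          simp only [Model.Sat]
          exact ⟨⟨φ, hφcl, Or.inr hroot⟩, hDer,
            ih φ hsz' hφcl ⟨φ, hφcl, Or.inr hroot⟩ (Der.refl φ)⟩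
      | all x φ =>
          have hbind : ∀ z ∈ φ.bindersF, z < m := fun z hz =>
            cl_binders φ₀ D m hv0 _ hχ z (Finset.mem_insert_of_mem hz)
          simp only [Model.Sat]
          intro h hagree
          have ht : (h x).1 ∈ D := (h x).2
          have hff : Fml.FreeFor (h x).1 x φ := by
            apply Fml.freeFor_of_binders
            intro z hz heq
            cases hhx : (h x).1 with
            | inl u =>
                rw [hhx] at heq
                injection heq with hu
                have hm := (hDv u).mp (hhx ▸ ht)
                have := hbind z hz
                omega
            | inr c => rw [hhx] at heq; exact absurd heq (by simp)
          have hder2 : Der w.1 (φ.subst x (h x).1) :=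
            Der.cut hDer (Der.allE x (h x).1 (Der.refl _) hff)
          have hmem : φ.subst x (h x).1 ∈ Fml.clL D φ₀ := Fml.clL_all hχ ht
          have hsz' : (φ.subst x (h x).1).size ≤ n := by
            rw [Fml.size_subst]; simp only [Fml.size] at hsz; omega
          have hsat := ih _ hsz' hmem w hder2
          have h2 := (sat_subst φ₀ D d₀ hd₀ φ x (h x).1 hff w (gstar D d₀ hd₀)).mp hsat
          refine (sat_agree _ φ w _ h ?_).mp h2
          intro y hy
          by_cases hyx : y = x
          · subst hyx
            simp only [if_pos rfl]
            exact tmval_gstar D d₀ hd₀ (h y)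
          · exact (if_neg hyx).trans (hagree y hyx).symm

end Truth
section Truth2

variable {Cst Rl : Type} {ar : Rl → ℕ}
variable (φ₀ : Fml Cst Rl ar) (D : List (ℕ ⊕ Cst)) (d₀ : ℕ ⊕ Cst) (hd₀ : d₀ ∈ D)
variable (m K : ℕ)

theorem truthL2 (hDv : ∀ y : ℕ, Sum.inl y ∈ D ↔ (m ≤ y ∧ y < m + K))
    (hDvar : ∀ t ∈ D, (Fml.varsT t : Finset ℕ).card ≤ 1)
    (hv0 : ∀ z ∈ φ₀.varsF, z < m) :
    ∀ n (χ : Fml Cst Rl ar), χ.size ≤ n →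
    ↑χ.fv ⊆ {y : ℕ | Sum.inl y ∈ D} →
    χ.consts ⊆ {c : Cst | Sum.inr c ∈ D} →
    (∀ z ∈ χ.bindersF, z < m) →
    (χ.varsF ∩ Finset.Ico m (m + K)).card + χ.udepth + φ₀.udepth < K →
    ∀ w : (TM φ₀ D d₀ hd₀).W, (TM φ₀ D d₀ hd₀).Sat w (gstar D d₀ hd₀) χ →
      Der w.1 χ := by
  intro n
  induction n with
  | zero => intro χ hsz; have := Fml.size_pos χ; omega
  | succ n ih =>
      intro χ hsz hfv hcs hbd hcard w hs
      cases χ with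
      | top => exact Der.top _
      | rel S ts =>
          have key : (fun i =>
              ((TM φ₀ D d₀ hd₀).tval (w := w) (gstar D d₀ hd₀) (ts i)).1) = ts := by
            funext i
            cases hts : ts i with
            | inl y =>
                have hyD : Sum.inl y ∈ D := hfv ⟨i, hts⟩
                rw [TM_tval]
                simp only [tmval, gstar]
                rw [dif_pos hyD]
            | inr c =>
                have hcD : Sum.inr c ∈ D := hcs ⟨i, hts⟩
                rw [TM_tval]
                simp only [tmval]
                rw [dif_pos hcD]
          simp only [Model.Sat] at hs
          have hD : Der w.1 (.rel S fun i =>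
              ((TM φ₀ D d₀ hd₀).tval (w := w) (gstar D d₀ hd₀) (ts i)).1) := hs
          rw [key] at hD
          exact hD
      | and φ ψ =>
          simp only [Model.Sat] at hs
          have hsz' : φ.size ≤ n ∧ ψ.size ≤ n := by
            simp only [Fml.size] at hsz; omega
          have hc1 : (φ.varsF ∩ Finset.Ico m (m + K)).card + φ.udepth + φ₀.udepth < K := by
            have h1 : (φ.varsF ∩ Finset.Ico m (m + K)).card ≤
                ((Fml.and φ ψ).varsF ∩ Finset.Ico m (m + K)).card :=
              Finset.card_le_card (Finset.inter_subset_inter Finset.subset_union_left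
                (Finset.Subset.refl _))
            have h2 : φ.udepth ≤ (Fml.and φ ψ).udepth := le_max_left _ _
            omega
          have hc2 : (ψ.varsF ∩ Finset.Ico m (m + K)).card + ψ.udepth + φ₀.udepth < K := by
            have h1 : (ψ.varsF ∩ Finset.Ico m (m + K)).card ≤
                ((Fml.and φ ψ).varsF ∩ Finset.Ico m (m + K)).card :=
              Finset.card_le_card (Finset.inter_subset_inter Finset.subset_union_right
                (Finset.Subset.refl _))
            have h2 : ψ.udepth ≤ (Fml.and φ ψ).udepth := le_max_right _ _
            omega
          exact Der.andI
            (ih φ hsz'.1 (fun y hy => hfv (Or.inl hy)) (fun c hc => hcs (Or.inl hc))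
              (fun z hz => hbd z (Finset.mem_union_left _ hz)) hc1 w hs.1)
            (ih ψ hsz'.2 (fun y hy => hfv (Or.inr hy)) (fun c hc => hcs (Or.inr hc))
              (fun z hz => hbd z (Finset.mem_union_right _ hz)) hc2 w hs.2)
      | dia φ =>
          simp only [Model.Sat] at hs
          obtain ⟨v, hR, hsv⟩ := hs
          have hsz' : φ.size ≤ n := by simp only [Fml.size] at hsz; omega
          have hder : Der v.1 φ := ih φ hsz' hfv hcs hbd hcard v hsv
          exact Der.cut hR (Der.diaMono hder)
      | all x φ =>
          have hwcard := cl_card φ₀ D m K hDvar hv0 w.1 w.2.1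
          obtain ⟨y, ⟨hym, hyK⟩, hyχ, hyw⟩ :=
            fresh_exists m K (Fml.all x φ).varsF w.1.varsF (by omega)
          have hyD : Sum.inl y ∈ D := (hDv y).mpr ⟨hym, hyK⟩
          have hyφ : y ∉ φ.varsF := fun hc => hyχ (Finset.mem_insert_of_mem hc)
          have hxy : x ≠ y := fun he => hyχ (he ▸ Finset.mem_insert_self x _)
          have hffy : Fml.FreeFor (Sum.inl y : ℕ ⊕ Cst) x φ := by
            apply Fml.freeFor_of_binders
            intro z hz heq
            injection heq with hu
            exact hyφ (hu ▸ Fml.bindersF_subset_varsF φ hz)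
          simp only [Model.Sat] at hs
          have h1 := hs (fun z => if z = x then gstar D d₀ hd₀ y else gstar D d₀ hd₀ z)
            (fun z hz => if_neg hz)
          have h2 : (TM φ₀ D d₀ hd₀).Sat w (gstar D d₀ hd₀) (φ.subst x (.inl y)) :=
            (sat_subst φ₀ D d₀ hd₀ φ x (.inl y) hffy w (gstar D d₀ hd₀)).mpr h1
          have hsz' : (φ.subst x (Sum.inl y : ℕ ⊕ Cst)).size ≤ n := by
            rw [Fml.size_subst]; simp only [Fml.size] at hsz; omega
          have hfv' : ↑(φ.subst x (Sum.inl y : ℕ ⊕ Cst)).fv ⊆ {y : ℕ | Sum.inl y ∈ D} := by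
            intro a ha
            rcases Fml.fv_subst_subset φ x _ ha with h' | h'
            · exact hfv h'
            · simp [Fml.varsT] at h'
              simpa [h'] using hyD
          have hcs' : (φ.subst x (Sum.inl y : ℕ ⊕ Cst)).consts ⊆
              {c : Cst | Sum.inr c ∈ D} := by
            intro c hc
            rcases Fml.consts_subst φ x _ hc with h' | h'
            · exact hcs h'
            · simp [Fml.constsT] at h'
          have hbd' : ∀ z ∈ (φ.subst x (Sum.inl y : ℕ ⊕ Cst)).bindersF, z < m := by
            intro z hz
            rw [Fml.bindersF_subst] at hz
            exact hbd z (Finset.mem_insert_of_mem hz)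
          have hcard' : ((φ.subst x (Sum.inl y : ℕ ⊕ Cst)).varsF ∩
              Finset.Ico m (m + K)).card + (φ.subst x (Sum.inl y : ℕ ⊕ Cst)).udepth
              + φ₀.udepth < K := by
            have hsub : (φ.subst x (Sum.inl y : ℕ ⊕ Cst)).varsF ∩ Finset.Ico m (m + K) ⊆
                insert y ((Fml.all x φ).varsF ∩ Finset.Ico m (m + K)) := by
              intro a ha
              rcases Finset.mem_inter.1 ha with ⟨ha1, ha2⟩
              rcases Finset.mem_union.1 (Fml.varsF_subst φ x _ ha1) with h' | h'
              · exact Finset.mem_insert_of_mem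
                  (Finset.mem_inter.2 ⟨Finset.mem_insert_of_mem h', ha2⟩)
              · simp [Fml.varsT] at h'
                simp [h']
            have hcardle := (Finset.card_le_card hsub).trans (Finset.card_insert_le _ _)
            have hud : (φ.subst x (Sum.inl y : ℕ ⊕ Cst)).udepth = φ.udepth :=
              Fml.udepth_subst φ x _
            have hud2 : (Fml.all x φ).udepth = φ.udepth + 1 := rfl
            omega
          have hder := ih _ hsz' hfv' hcs' hbd' hcard' w h2
          have hyfvw : y ∉ w.1.fv := fun hc =>
            hyw (Fml.fv_subset_varsF w.1 hc)
          have hall : Der w.1 (.all y (φ.subst x (.inl y))) := Der.allI y hder hyfvw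
          exact Der.cut hall (der_alpha hxy hyφ)

end Truth2
theorem term_model_properties (Cst Rl : Type) (ar : Rl → ℕ)
    (p : Pair Cst Rl ar) (hposfin : p.pos.Finite) (hnegfin : p.neg.Finite)
    (hclosed : p.ClosedP) (hcons : p.Consistent)
    (hsing : ∃ φ₀ : Fml Cst Rl ar, p.pos = {φ₀}) :
    ∃ M : Model Cst Rl ar, M.Adequate ∧ Finite M.W ∧ Irreflexive M.R ∧
      M.ConstantDomain ∧
      ∃ w₀ : M.W, (∀ v : M.W, v ≠ w₀ → M.R w₀ v) ∧
        ∀ g : ℕ → M.Dom w₀,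
          (∀ φ ∈ p.pos, M.Sat w₀ g φ) ∧ (∀ φ ∈ p.neg, ¬ M.Sat w₀ g φ) := by
  classical
  obtain ⟨φ₀, hpos⟩ := hsing
  have hφ₀pos : φ₀ ∈ p.pos := by rw [hpos]; exact rfl
  have hfv0 : φ₀.fv = ∅ := hclosed φ₀ (Or.inl hφ₀pos)
  -- quantifier depth bound
  set U : ℕ := sSup (Fml.udepth '' p.neg) with hU_def
  have hUb : ∀ δ ∈ p.neg, δ.udepth ≤ U := fun δ h =>
    le_csSup ((hnegfin.image _).bddAbove) ⟨δ, h, rfl⟩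
  set K : ℕ := φ₀.udepth + U + 1 with hK_def
  -- variable bound
  set Sv : Set ℕ := ↑φ₀.varsF ∪ ⋃ δ ∈ p.neg, ↑δ.varsF with hSv_def
  have hSvfin : Sv.Finite :=
    (φ₀.varsF.finite_toSet).union
      (Set.Finite.biUnion hnegfin fun δ _ => (Fml.varsF δ).finite_toSet)
  set m : ℕ := sSup Sv + 1 with hm_def
  have hm : ∀ a ∈ Sv, a < m := fun a ha =>
    Nat.lt_succ_of_le (le_csSup hSvfin.bddAbove ha)
  -- constants
  set DC : Set Cst := φ₀.consts ∪ ⋃ δ ∈ p.neg, δ.consts with hDC_def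
  have hDCfin : DC.Finite :=
    (Fml.consts_finite φ₀).union
      (Set.Finite.biUnion hnegfin fun δ _ => Fml.consts_finite δ)
  -- the domain list
  set D : List (ℕ ⊕ Cst) :=
    ((Finset.Ico m (m + K)).toList.map Sum.inl) ++ (hDCfin.toFinset.toList.map Sum.inr)
    with hD_def
  have hDv : ∀ y : ℕ, Sum.inl y ∈ D ↔ (m ≤ y ∧ y < m + K) := by
    intro y
    simp [hD_def, List.mem_append, List.mem_map, Finset.mem_toList, Finset.mem_Ico]
  have hDc : ∀ c : Cst, Sum.inr c ∈ D ↔ c ∈ DC := by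
    intro c
    simp [hD_def, List.mem_append, List.mem_map, Finset.mem_toList,
      Set.Finite.mem_toFinset]
  have hKpos : 0 < K := by omega
  have hd₀ : (Sum.inl m : ℕ ⊕ Cst) ∈ D := (hDv m).mpr ⟨le_refl m, by omega⟩
  have hDvar : ∀ t ∈ D, (Fml.varsT t : Finset ℕ).card ≤ 1 := by
    intro t _
    cases t <;> simp [Fml.varsT]
  have hc0 : φ₀.consts ⊆ {c : Cst | Sum.inr c ∈ D} := fun c hc =>
    (hDc c).mpr (Or.inl hc)
  have hv0 : ∀ z ∈ φ₀.varsF, z < m := fun z hz => hm z (Or.inl hz)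
  -- the model
  refine ⟨TM φ₀ D (Sum.inl m) hd₀, ?_, ?_, ?_, ?_, ?_⟩
  · exact { trans := fun {a b c} h1 h2 => der_dia_trans h1 h2
            etaTrans := fun _ _ _ => rfl
            concord := fun _ _ => rfl }
  · exact Set.Finite.to_subtype
      (Set.Finite.subset (List.finite_toSet _) (fun χ hχ => hχ.1))
  · intro w hw
    have h1 := der_mdepth hw
    simp [Fml.mdepth] at h1
  · intro w v; rfl
  · refine ⟨⟨φ₀, Fml.mem_clL_self D φ₀, Or.inl rfl⟩, ?_, ?_⟩
    · intro v hne
      rcases v.2.2 with he | hd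
      · exact absurd (Subtype.ext he) hne
      · exact hd
    · intro g
      constructor
      · intro φ hφ
        have hφeq : φ = φ₀ := by rw [hpos] at hφ; exact hφ
        rw [hφeq]
        have hsat := truthL1 φ₀ D (Sum.inl m) hd₀ m K hDv hfv0 hc0 hv0
          φ₀.size φ₀ (le_refl _) (Fml.mem_clL_self D φ₀)
          ⟨φ₀, Fml.mem_clL_self D φ₀, Or.inl rfl⟩ (Der.refl φ₀)
        refine (sat_agree _ φ₀ _ _ g ?_).mp hsat
        intro y hy
        rw [hfv0] at hy
        exact absurd hy (Set.notMem_empty y)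
      · intro δ hδ hsat
        have hfvδ : δ.fv = ∅ := hclosed δ (Or.inr hδ)
        have hsat' := (sat_agree _ δ _ g (gstar D (Sum.inl m) hd₀) ?_).mp hsat
        swap
        · intro y hy
          rw [hfvδ] at hy
          exact absurd hy (Set.notMem_empty y)
        have hcardδ : δ.varsF ∩ Finset.Ico m (m + K) = ∅ := by
          ext a
          simp only [Finset.mem_inter, Finset.mem_Ico, Finset.notMem_empty, iff_false,
            not_and]
          intro ha
          have : a ∈ Sv := Or.inr (Set.mem_biUnion hδ (Finset.mem_coe.mpr ha))
          have := hm a this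
          omega
        have hder := truthL2 φ₀ D (Sum.inl m) hd₀ m K hDv hDvar hv0
          δ.size δ (le_refl _)
          (by rw [hfvδ]; exact Set.empty_subset _)
          (fun c hc => (hDc c).mpr (Or.inr (Set.mem_biUnion hδ hc)))
          (fun z hz => hm z (Or.inr (Set.mem_biUnion hδ
            (Finset.mem_coe.mpr (Fml.bindersF_subset_varsF δ hz)))))
          (by rw [hcardδ]; have := hUb δ hδ; simp; omega)
          _ hsat'
        have hder2 : Der (conjList [φ₀]) δ := Der.cut (Der.andE1 φ₀ .top) hder
        exact hcons δ hδ [φ₀]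
          (fun χ hχ => by
            simp only [List.mem_singleton] at hχ
            rw [hχ, hpos]; exact rfl) hder2


end QRC1
end

section
/- If C is a finite set of constants, p⁺ is a finite set of formulas each of whose formulas lies in Cl_C(Φ) for a finite set of closed formulas Φ, ∀x ψ ∈ Cl_C(Φ), and |C| > cdepth(⋀p⁺) + cdepth(∀x ψ), then there exists a constant d ∈ C that occurs neither in any formula of p⁺ nor in ∀x ψ; consequently, if additionally ⋀p⁺ ⊬ ∀x ψ in QRC₁, then ⋀p⁺ ⊬ ψ[x/d] in QRC₁. -/
namespace QRC1

section Aux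

variable {Cst Rl : Type} {ar : Rl → ℕ}

theorem consts_finite (φ : Fml Cst Rl ar) : φ.consts.Finite := by
  induction φ with
  | top => simp [Fml.consts]
  | rel S ts =>
      have : {c : Cst | ∃ i, ts i = Sum.inr c} = Sum.inr ⁻¹' (Set.range ts) := by
        ext c; simp [Set.range, eq_comm]
      rw [Fml.consts, this]
      exact (Set.finite_range ts).preimage (Sum.inr_injective.injOn)
  | and φ ψ ihφ ihψ => exact (ihφ.union ihψ)
  | dia φ ih => exact ih
  | all y φ ih => exact ih

theorem subst_of_not_free (φ : Fml Cst Rl ar) (x : ℕ) (t : ℕ ⊕ Cst)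
    (h : x ∉ φ.fv) : φ.subst x t = φ := by
  induction φ generalizing x with
  | top => rfl
  | rel S ts =>
      simp only [Fml.fv, Set.mem_setOf_eq, not_exists] at h
      simp only [Fml.subst]
      congr 1
      funext i
      cases hts : ts i with
      | inl y =>
          have : y ≠ x := fun hy => h i (hy ▸ hts)
          simp [Fml.substT, this]
      | inr c => simp [Fml.substT]
  | and φ ψ ihφ ihψ =>
      simp only [Fml.fv, Set.mem_union, not_or] at h
      simp [Fml.subst, ihφ _ h.1, ihψ _ h.2]
  | dia φ ih =>
      simp [Fml.subst, ih _ h]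
  | all y φ ih =>
      by_cases hyx : y = x
      · simp [Fml.subst, hyx]
      · have : x ∉ φ.fv := by
          intro hx
          exact h (by simp [Fml.fv, hx, Ne.symm hyx])
        simp [Fml.subst, hyx, ih _ this]

theorem fv_subst_const (φ : Fml Cst Rl ar) (x : ℕ) (c : Cst) :
    (φ.subst x (Sum.inr c)).fv = φ.fv \ {x} := by
  induction φ generalizing x with
  | top => simp [Fml.subst, Fml.fv]
  | rel S ts =>
      ext y
      simp only [Fml.subst, Fml.fv, Set.mem_setOf_eq, Set.mem_diff, Set.mem_singleton_iff]
      constructor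
      · rintro ⟨i, hi⟩
        cases hts : ts i with
        | inl z =>
            rw [hts] at hi
            by_cases hz : z = x
            · simp [Fml.substT, hz] at hi
            · simp only [Fml.substT, if_neg hz, Sum.inl.injEq] at hi
              subst hi
              exact ⟨⟨i, hts⟩, hz⟩
        | inr d => rw [hts] at hi; simp [Fml.substT] at hi
      · rintro ⟨⟨i, hi⟩, hyx⟩
        exact ⟨i, by simp [hi, Fml.substT, hyx]⟩
  | and φ ψ ihφ ihψ =>
      simp [Fml.subst, Fml.fv, ihφ, ihψ, Set.union_diff_distrib]
  | dia φ ih => simp [Fml.subst, Fml.fv, ih]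
  | all y φ ih =>
      by_cases hyx : y = x
      · subst hyx
        simp [Fml.subst, Fml.fv, Set.diff_diff, Set.union_self]
      · simp only [Fml.subst, if_neg hyx, Fml.fv, ih]
        rw [Set.diff_diff_comm]

theorem closed_of_mem_cl (C : Set Cst) :
    ∀ (n : ℕ) (φ : Fml Cst Rl ar), φ.size ≤ n → φ.Closed →
      ∀ χ ∈ φ.cl C, χ.Closed := by
  intro n
  induction n with
  | zero => intro φ hφ; cases φ <;> simp [Fml.size] at hφ
  | succ n ih =>
      intro φ hsize hcl χ hχ
      cases φ with
      | top =>
          rw [Fml.cl] at hχ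
          simp only [Set.mem_singleton_iff] at hχ
          subst hχ; exact hcl
      | rel S ts =>
          rw [Fml.cl] at hχ
          rcases hχ with hχ | hχ
          · exact hχ ▸ hcl
          · simp at hχ; subst hχ; simp [Fml.Closed, Fml.fv]
      | and φ ψ =>
          have hφc : φ.Closed := by
            have := hcl
            simp only [Fml.Closed, Fml.fv, Set.union_empty_iff] at this ⊢
            exact this.1
          have hψc : ψ.Closed := by
            have := hcl
            simp only [Fml.Closed, Fml.fv, Set.union_empty_iff] at this ⊢
            exact this.2
          rw [Fml.cl] at hχ
          rcases hχ with (hχ | hχ) | hχ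
          · simp at hχ; subst hχ; exact hcl
          · exact ih φ (by simp [Fml.size] at hsize; omega) hφc χ hχ
          · exact ih ψ (by simp [Fml.size] at hsize; omega) hψc χ hχ
      | dia φ =>
          rw [Fml.cl] at hχ
          rcases hχ with hχ | hχ
          · simp at hχ; subst hχ; exact hcl
          · exact ih φ (by simp [Fml.size] at hsize; omega) hcl χ hχ
      | all y φ =>
          rw [Fml.cl] at hχ
          rcases hχ with hχ | hχ
          · simp at hχ; subst hχ; exact hcl
          · simp only [Set.mem_iUnion] at hχ
            obtain ⟨c, _, hχ⟩ := hχ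
            have hclosed : (φ.subst y (Sum.inr c)).Closed := by
              have : φ.fv \ {y} = ∅ := hcl
              simpa [Fml.Closed, fv_subst_const] using this
            exact ih _ (by simp [Fml.size, Fml.size_subst] at hsize ⊢; omega)
              hclosed χ hχ

theorem closed_of_mem_clSet {C : Set Cst} {Φ : Set (Fml Cst Rl ar)}
    (hΦcl : ∀ φ ∈ Φ, φ.Closed) {χ : Fml Cst Rl ar} (hχ : χ ∈ clSet C Φ) :
    χ.Closed := by
  simp only [clSet, Set.mem_iUnion] at hχ
  obtain ⟨γ, hγ, hχ⟩ := hχ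
  exact closed_of_mem_cl C γ.size γ le_rfl (hΦcl γ hγ) χ hχ

theorem conjList_closed (L : List (Fml Cst Rl ar)) (h : ∀ χ ∈ L, χ.Closed) :
    (conjList L).Closed := by
  induction L with
  | nil => simp [conjList, Fml.Closed, Fml.fv]
  | cons φ L ih =>
      simp only [conjList, Fml.Closed, Fml.fv, Set.union_empty_iff]
      exact ⟨h φ (List.mem_cons_self), ih fun χ hχ => h χ (List.mem_cons_of_mem _ hχ)⟩

end Aux

theorem fresh_constant (Cst Rl : Type) (ar : Rl → ℕ)
    (C : Set Cst) (hCfin : C.Finite)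
    (Φ : Set (Fml Cst Rl ar)) (hΦfin : Φ.Finite) (hΦcl : ∀ φ ∈ Φ, φ.Closed)
    (L : List (Fml Cst Rl ar)) (hL : ∀ χ ∈ L, χ ∈ clSet C Φ)
    (x : ℕ) (ψ : Fml Cst Rl ar) (hψ : Fml.all x ψ ∈ clSet C Φ)
    (hcard : (conjList L).cdepth + (Fml.all x ψ).cdepth < C.ncard) :
    ∃ d ∈ C, d ∉ (conjList L).consts ∧ d ∉ (Fml.all x ψ).consts ∧
      (¬ Der (conjList L) (Fml.all x ψ) →
        ¬ Der (conjList L) (ψ.subst x (Sum.inr d))) := by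
  classical
  set φ := conjList L with hφdef
  set S := φ.consts ∪ (Fml.all x ψ).consts with hS
  have hSfin : S.Finite := (consts_finite φ).union (consts_finite _)
  have hnotsub : ¬ C ⊆ S := by
    intro hsub
    have h1 : C.ncard ≤ S.ncard := Set.ncard_le_ncard hsub hSfin
    have h2 : S.ncard ≤ φ.cdepth + (Fml.all x ψ).cdepth :=
      Set.ncard_union_le _ _
    omega
  obtain ⟨d, hdC, hdS⟩ := Set.not_subset.mp hnotsub
  simp only [hS, Set.mem_union, not_or] at hdS
  refine ⟨d, hdC, hdS.1, hdS.2, ?_⟩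
  intro hnder hder
  apply hnder
  have hφcl : φ.Closed :=
    conjList_closed L fun χ hχ => closed_of_mem_clSet hΦcl (hL χ hχ)
  have hxφ : x ∉ φ.fv := by rw [hφcl]; exact Set.notMem_empty x
  have hsub : φ.subst x (Sum.inr d) = φ :=
    subst_of_not_free φ x _ hxφ
  have hdψ : d ∉ ψ.consts := hdS.2
  have : Der φ ψ := Der.genC x d (by rw [hsub]; exact hder) hdS.1 hdψ
  exact Der.allI x this hxφ



end QRC1
end
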